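/- Let N ≥ 4 be even, β ∈ ℝ, ω_k = √(1 + 4 sin²(kπ/N)). Define on ℝ^{2N} the functions: a_k, b_k, c_k, d_k for 1 ≤ k < N/2 (the Hopf variables), a_{N/2} = ½(Q_{N/2}² + P_{N/2}²), a_N = ½(Q_N² + P_N²), the differences b_k − b_{N/2−k} for 1 ≤ k < N/4, the function c_{N/4} when 4 divides N, and the quartics K_k = 3 (c_k c_{N/2−k} − d_k d_{N/2−k})/(ω_k ω_{N/2−k}) − (3/4)(b_k²/ω_k² + b_{N/2−k}²/ω_{N/2−k}²) for 1 ≤ k < N/4. Let H̄ = H₂ + H̄₄ with H₂ = Σ_{k=1}^N (ω_k/2)(Q_k² + P_k²) and H̄₄ = (β/(2N)) [ (3/2)(a_{N/2}²/ω_{N/2}² + a_N²/ω_N²) + 6 a_{N/2} a_N/(ω_{N/2} ω_N) + 6 (a_{N/2}/ω_{N/2} + a_N/ω_N) Σ_{1≤k<N/2} a_k/ω_k + (3/4) Σ_{1≤k<N/2} (3a_k² − b_k²)/ω_k² + 6 Σ_{1≤k<l<N/2} a_k a_l/(ω_k ω_l) + 3 Σ_{1≤k<N/4} (c_k c_{N/2−k}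 − d_k d_{N/2−k})/(ω_k ω_{N/2−k}) + (3/4)(c_{N/4}² − d_{N/4}²)/ω_{N/4}² ], where the terms with subscript N/4 appear only when 4 divides N. Then the functions a_k (1 ≤ k < N/2), a_{N/2}, a_N, b_k − b_{N/2−k} (1 ≤ k < N/4), c_{N/4} (if 4 | N), and K_k (1 ≤ k < N/4) pairwise Poisson-commute and each Poisson-commutes with H̄. -/

import Mathlib

noncomputable section

open Finset

/-- The Poisson bracket on `ℝ^{2N}` with coordinates `(Q, P)`:
`{f,g} = Σ_k (∂f/∂Q_k ∂g/∂P_k − ∂f/∂P_k ∂g/∂Q_k)`. -/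
def pb {N : ℕ} (f g : ((Fin N → ℝ) × (Fin N → ℝ)) → ℝ)
    (x : (Fin N → ℝ) × (Fin N → ℝ)) : ℝ :=
  ∑ k : Fin N,
    (fderiv ℝ f x (Pi.single k (1 : ℝ), 0) * fderiv ℝ g x (0, Pi.single k (1 : ℝ))
      - fderiv ℝ f x (0, Pi.single k (1 : ℝ)) * fderiv ℝ g x (Pi.single k (1 : ℝ), 0))

/-- The coordinate with (1-based) label `j` is the component `(j−1) mod N` of `Fin N`. -/
def co (N : ℕ) (hN : 0 < N) (j : ℕ) : Fin N := ⟨(j - 1) % N, Nat.mod_lt _ hN⟩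

/-- Hopf variable `a_k = ½(Q_k² + P_k² + Q_{N−k}² + P_{N−k}²)`. -/
def aH (N : ℕ) (hN : 0 < N) (k : ℕ) (x : (Fin N → ℝ) × (Fin N → ℝ)) : ℝ :=
  (x.1 (co N hN k) ^ 2 + x.2 (co N hN k) ^ 2
    + x.1 (co N hN (N - k)) ^ 2 + x.2 (co N hN (N - k)) ^ 2) / 2

/-- Hopf variable `b_k = Q_k P_{N−k} − Q_{N−k} P_k`. -/
def bH (N : ℕ) (hN : 0 < N) (k : ℕ) (x : (Fin N → ℝ) × (Fin N → ℝ)) : ℝ :=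
  x.1 (co N hN k) * x.2 (co N hN (N - k)) - x.1 (co N hN (N - k)) * x.2 (co N hN k)

/-- Hopf variable `c_k = ½(Q_k² + P_k² − Q_{N−k}² − P_{N−k}²)`. -/
def cH (N : ℕ) (hN : 0 < N) (k : ℕ) (x : (Fin N → ℝ) × (Fin N → ℝ)) : ℝ :=
  (x.1 (co N hN k) ^ 2 + x.2 (co N hN k) ^ 2
    - x.1 (co N hN (N - k)) ^ 2 - x.2 (co N hN (N - k)) ^ 2) / 2

/-- Hopf variable `d_k = Q_k Q_{N−k} + P_k P_{N−k}`. -/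
def dH (N : ℕ) (hN : 0 < N) (k : ℕ) (x : (Fin N → ℝ) × (Fin N → ℝ)) : ℝ :=
  x.1 (co N hN k) * x.1 (co N hN (N - k)) + x.2 (co N hN k) * x.2 (co N hN (N - k))

/-- `a_N = ½(Q_N² + P_N²)`. -/
def aNf (N : ℕ) (hN : 0 < N) (x : (Fin N → ℝ) × (Fin N → ℝ)) : ℝ :=
  (x.1 (co N hN N) ^ 2 + x.2 (co N hN N) ^ 2) / 2

/-- `a_{N/2} = ½(Q_{N/2}² + P_{N/2}²)` (for `N` even). -/
def aHalf (N : ℕ) (hN : 0 < N) (x : (Fin N → ℝ) × (Fin N → ℝ)) : ℝ :=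
  (x.1 (co N hN (N / 2)) ^ 2 + x.2 (co N hN (N / 2)) ^ 2) / 2

/-- The normal-mode frequencies `ω_k = √(1 + 4 sin²(kπ/N))`
(note `ω_{N/2} = √5` and `ω_N = 1`). -/
def omg (N k : ℕ) : ℝ := Real.sqrt (1 + 4 * Real.sin (k * Real.pi / N) ^ 2)

/-- The quartic integrals
`K_k = 3(c_k c_{N/2−k} − d_k d_{N/2−k})/(ω_k ω_{N/2−k}) − (3/4)(b_k²/ω_k² + b_{N/2−k}²/ω_{N/2−k}²)`. -/
def Kquart (N : ℕ) (hN : 0 < N) (k : ℕ) (x : (Fin N → ℝ) × (Fin N → ℝ)) : ℝ :=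
  3 * (cH N hN k x * cH N hN (N / 2 - k) x - dH N hN k x * dH N hN (N / 2 - k) x)
      / (omg N k * omg N (N / 2 - k))
    - (3 / 4) * (bH N hN k x ^ 2 / omg N k ^ 2
      + bH N hN (N / 2 - k) x ^ 2 / omg N (N / 2 - k) ^ 2)

/-- The quadratic part `H₂ = Σ_{k=1}^N (ω_k/2)(Q_k² + P_k²)`. -/
def H2KG (N : ℕ) (hN : 0 < N) (x : (Fin N → ℝ) × (Fin N → ℝ)) : ℝ :=
  ∑ k ∈ Finset.Icc 1 N, omg N k / 2 * (x.1 (co N hN k) ^ 2 + x.2 (co N hN k) ^ 2)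

/-- The fourth order part `H̄₄` of the normal form of the periodic KG lattice, `N` even
(the terms with subscript `N/4` are present only when `4 ∣ N`). -/
def H4even (N : ℕ) (hN : 0 < N) (β : ℝ) (x : (Fin N → ℝ) × (Fin N → ℝ)) : ℝ :=
  β / (2 * N) *
    ((3 / 2) * (aHalf N hN x ^ 2 / omg N (N / 2) ^ 2 + aNf N hN x ^ 2 / omg N N ^ 2)
      + 6 * aHalf N hN x * aNf N hN x / (omg N (N / 2) * omg N N)
      + 6 * (aHalf N hN x / omg N (N / 2) + aNf N hN x / omg N N) *
          ∑ k ∈ Finset.Ico 1 (N / 2), aH N hN k x / omg N k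
      + (3 / 4) * ∑ k ∈ Finset.Ico 1 (N / 2),
          (3 * aH N hN k x ^ 2 - bH N hN k x ^ 2) / omg N k ^ 2
      + 6 * ∑ k ∈ Finset.Ico 1 (N / 2), ∑ l ∈ Finset.Ico (k + 1) (N / 2),
          aH N hN k x * aH N hN l x / (omg N k * omg N l)
      + 3 * ∑ k ∈ (Finset.Ico 1 (N / 2)).filter (fun k => 4 * k < N),
          (cH N hN k x * cH N hN (N / 2 - k) x - dH N hN k x * dH N hN (N / 2 - k) x)
            / (omg N k * omg N (N / 2 - k))
      + (if N % 4 = 0 then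
          (3 / 4) * (cH N hN (N / 4) x ^ 2 - dH N hN (N / 4) x ^ 2) / omg N (N / 4) ^ 2
        else 0))

/-- The family of first integrals of the truncated normal form, `N` even:
`a_k` (`1 ≤ k < N/2`), `a_{N/2}`, `a_N`, `b_k − b_{N/2−k}` (`1 ≤ k < N/4`),
`c_{N/4}` (when `4 ∣ N`), and the quartics `K_k` (`1 ≤ k < N/4`). -/
def evenFam (N : ℕ) (hN : 0 < N) : Set (((Fin N → ℝ) × (Fin N → ℝ)) → ℝ) :=
  {f | (∃ k, 1 ≤ k ∧ 2 * k < N ∧ f = aH N hN k) ∨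
    f = aHalf N hN ∨ f = aNf N hN ∨
    (∃ k, 1 ≤ k ∧ 4 * k < N ∧ f = fun x => bH N hN k x - bH N hN (N / 2 - k) x) ∨
    (N % 4 = 0 ∧ f = cH N hN (N / 4)) ∨
    (∃ k, 1 ≤ k ∧ 4 * k < N ∧ f = Kquart N hN k)}

namespace KGaux
variable {N : ℕ}

abbrev E (N : ℕ) := (Fin N → ℝ) × (Fin N → ℝ)

def Lq (i : Fin N) : E N →L[ℝ] ℝ :=
  (ContinuousLinearMap.proj i).comp (ContinuousLinearMap.fst ℝ (Fin N → ℝ) (Fin N → ℝ))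
def Lp (i : Fin N) : E N →L[ℝ] ℝ :=
  (ContinuousLinearMap.proj i).comp (ContinuousLinearMap.snd ℝ (Fin N → ℝ) (Fin N → ℝ))

@[simp] lemma Lq_apply (i : Fin N) (v : E N) : Lq i v = v.1 i := rfl
@[simp] lemma Lp_apply (i : Fin N) (v : E N) : Lp i v = v.2 i := rfl

lemma hasQ (i : Fin N) (x : E N) : HasFDerivAt (fun y : E N => y.1 i) (Lq i) x :=
  (Lq i).hasFDerivAt
lemma hasP (i : Fin N) (x : E N) : HasFDerivAt (fun y : E N => y.2 i) (Lp i) x :=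
  (Lp i).hasFDerivAt

/-- canonical gradient CLM supported on two indices -/
def gradC (i i' : Fin N) (aQ aP aQ' aP' : ℝ) : E N →L[ℝ] ℝ :=
  aQ • Lq i + aP • Lp i + aQ' • Lq i' + aP' • Lp i'

@[simp] lemma gradC_apply (i i' : Fin N) (aQ aP aQ' aP' : ℝ) (v : E N) :
    gradC i i' aQ aP aQ' aP' v = aQ * v.1 i + aP * v.2 i + aQ' * v.1 i' + aP' * v.2 i' := by
  simp [gradC, smul_eq_mul]

def ind (i j : Fin N) : ℝ := if i = j then 1 else 0

def S (i k : Fin N) : ℝ := if i = k then 1 else 0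

lemma Ssum (i j : Fin N) : ∑ k : Fin N, S i k * S j k = ind i j := by
  have h : ∀ k : Fin N, S i k * S j k = if i = k then S j k else 0 := by
    intro k; by_cases h : i = k <;> simp [S, h]
  rw [Finset.sum_congr rfl fun k _ => h k, Finset.sum_ite_eq]
  by_cases h : i = j <;> simp [S, ind, h, eq_comm]

lemma pb_eval (f g : E N → ℝ) (x : E N) (i i' j j' : Fin N)
    (aQ aP aQ' aP' bQ bP bQ' bP' : ℝ)
    (hf : HasFDerivAt f (gradC i i' aQ aP aQ' aP') x)
    (hg : HasFDerivAt g (gradC j j' bQ bP bQ' bP') x) :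
    pb f g x = (aQ * bP - aP * bQ) * ind i j + (aQ * bP' - aP * bQ') * ind i j'
      + (aQ' * bP - aP' * bQ) * ind i' j + (aQ' * bP' - aP' * bQ') * ind i' j' := by
  have h1 : ∀ k : Fin N,
      (fderiv ℝ f x (Pi.single k (1 : ℝ), 0) * fderiv ℝ g x (0, Pi.single k (1 : ℝ))
        - fderiv ℝ f x (0, Pi.single k (1 : ℝ)) * fderiv ℝ g x (Pi.single k (1 : ℝ), 0))
      = (aQ * bP - aP * bQ) * (S i k * S j k) + (aQ * bP' - aP * bQ') * (S i k * S j' k)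
        + (aQ' * bP - aP' * bQ) * (S i' k * S j k)
        + (aQ' * bP' - aP' * bQ') * (S i' k * S j' k) := by
    intro k
    rw [hf.fderiv, hg.fderiv]
    simp only [gradC_apply, S, Pi.single_apply, Prod.fst, Prod.snd, Pi.zero_apply]
    ring
  unfold pb
  rw [Finset.sum_congr rfl fun k _ => h1 k]
  simp only [Finset.sum_add_distrib, ← Finset.mul_sum, Ssum]

end KGaux
/-- `e_k = Q_k² + P_k²` (single-index quadratic, used for `H₂`). -/
def eH (N : ℕ) (hN : 0 < N) (k : ℕ) (x : (Fin N → ℝ) × (Fin N → ℝ)) : ℝ :=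
  x.1 (co N hN k) ^ 2 + x.2 (co N hN k) ^ 2

namespace KGaux
variable {N : ℕ} (hN : 0 < N) (x : E N)

lemma hasAH (k : ℕ) :
    HasFDerivAt (aH N hN k)
      (gradC (co N hN k) (co N hN (N - k)) (x.1 (co N hN k)) (x.2 (co N hN k))
        (x.1 (co N hN (N - k))) (x.2 (co N hN (N - k)))) x := by
  set i := co N hN k; set i' := co N hN (N - k)
  have e : aH N hN k = fun y : E N =>
      (2⁻¹ : ℝ) * (y.1 i * y.1 i + y.2 i * y.2 i + y.1 i' * y.1 i' + y.2 i' * y.2 i') := by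
    funext y; simp only [aH]; ring
  rw [e]
  have h := (((((hasQ i x).mul (hasQ i x)).add ((hasP i x).mul (hasP i x))).add
    ((hasQ i' x).mul (hasQ i' x))).add ((hasP i' x).mul (hasP i' x))).const_mul (2⁻¹ : ℝ)
  refine h.congr_fderiv ?_
  refine ContinuousLinearMap.ext fun v => ?_
  simp [gradC, smul_eq_mul]
  ring

lemma hasEH (k : ℕ) :
    HasFDerivAt (eH N hN k)
      (gradC (co N hN k) (co N hN k) (2 * x.1 (co N hN k)) (2 * x.2 (co N hN k)) 0 0) x := by
  set i := co N hN k
  have e : eH N hN k = fun y : E N => y.1 i * y.1 i + y.2 i * y.2 i := by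
    funext y; simp only [eH]; ring
  rw [e]
  have h := ((hasQ i x).mul (hasQ i x)).add ((hasP i x).mul (hasP i x))
  refine h.congr_fderiv ?_
  refine ContinuousLinearMap.ext fun v => ?_
  simp [gradC, smul_eq_mul]
  ring

lemma hasBH (k : ℕ) :
    HasFDerivAt (bH N hN k)
      (gradC (co N hN k) (co N hN (N - k)) (x.2 (co N hN (N - k))) (-x.1 (co N hN (N - k)))
        (-x.2 (co N hN k)) (x.1 (co N hN k))) x := by
  set i := co N hN k; set i' := co N hN (N - k)
  have e : bH N hN k = fun y : E N => y.1 i * y.2 i' - y.1 i' * y.2 i := by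
    funext y; simp only [bH]; rfl
  rw [e]
  have h := ((hasQ i x).mul (hasP i' x)).sub ((hasQ i' x).mul (hasP i x))
  refine h.congr_fderiv ?_
  refine ContinuousLinearMap.ext fun v => ?_
  simp [gradC, smul_eq_mul]
  ring

lemma hasCH (k : ℕ) :
    HasFDerivAt (cH N hN k)
      (gradC (co N hN k) (co N hN (N - k)) (x.1 (co N hN k)) (x.2 (co N hN k))
        (-x.1 (co N hN (N - k))) (-x.2 (co N hN (N - k)))) x := by
  set i := co N hN k; set i' := co N hN (N - k)
  have e : cH N hN k = fun y : E N =>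
      (2⁻¹ : ℝ) * (y.1 i * y.1 i + y.2 i * y.2 i - y.1 i' * y.1 i' - y.2 i' * y.2 i') := by
    funext y; simp only [cH]; ring
  rw [e]
  have h := (((((hasQ i x).mul (hasQ i x)).add ((hasP i x).mul (hasP i x))).sub
    ((hasQ i' x).mul (hasQ i' x))).sub ((hasP i' x).mul (hasP i' x))).const_mul (2⁻¹ : ℝ)
  refine h.congr_fderiv ?_
  refine ContinuousLinearMap.ext fun v => ?_
  simp [gradC, smul_eq_mul]
  ring

lemma hasDH (k : ℕ) :
    HasFDerivAt (dH N hN k)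
      (gradC (co N hN k) (co N hN (N - k)) (x.1 (co N hN (N - k))) (x.2 (co N hN (N - k)))
        (x.1 (co N hN k)) (x.2 (co N hN k))) x := by
  set i := co N hN k; set i' := co N hN (N - k)
  have e : dH N hN k = fun y : E N => y.1 i * y.1 i' + y.2 i * y.2 i' := by
    funext y; simp only [dH]; rfl
  rw [e]
  have h := ((hasQ i x).mul (hasQ i' x)).add ((hasP i x).mul (hasP i' x))
  refine h.congr_fderiv ?_
  refine ContinuousLinearMap.ext fun v => ?_
  simp [gradC, smul_eq_mul]
  ring

lemma hasAHalf :
    HasFDerivAt (aHalf N hN)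
      (gradC (co N hN (N / 2)) (co N hN (N / 2)) (x.1 (co N hN (N / 2)))
        (x.2 (co N hN (N / 2))) 0 0) x := by
  set i := co N hN (N / 2)
  have e : aHalf N hN = fun y : E N => (2⁻¹ : ℝ) * (y.1 i * y.1 i + y.2 i * y.2 i) := by
    funext y; simp only [aHalf]; ring
  rw [e]
  have h := (((hasQ i x).mul (hasQ i x)).add ((hasP i x).mul (hasP i x))).const_mul (2⁻¹ : ℝ)
  refine h.congr_fderiv ?_
  refine ContinuousLinearMap.ext fun v => ?_
  simp [gradC, smul_eq_mul]
  ring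

lemma hasANf :
    HasFDerivAt (aNf N hN)
      (gradC (co N hN N) (co N hN N) (x.1 (co N hN N)) (x.2 (co N hN N)) 0 0) x := by
  set i := co N hN N
  have e : aNf N hN = fun y : E N => (2⁻¹ : ℝ) * (y.1 i * y.1 i + y.2 i * y.2 i) := by
    funext y; simp only [aNf]; ring
  rw [e]
  have h := (((hasQ i x).mul (hasQ i x)).add ((hasP i x).mul (hasP i x))).const_mul (2⁻¹ : ℝ)
  refine h.congr_fderiv ?_
  refine ContinuousLinearMap.ext fun v => ?_
  simp [gradC, smul_eq_mul]
  ring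

@[fun_prop] lemma diffAH (k : ℕ) : Differentiable ℝ (aH N hN k) :=
  fun x => (hasAH hN x k).differentiableAt
@[fun_prop] lemma diffBH (k : ℕ) : Differentiable ℝ (bH N hN k) :=
  fun x => (hasBH hN x k).differentiableAt
@[fun_prop] lemma diffCH (k : ℕ) : Differentiable ℝ (cH N hN k) :=
  fun x => (hasCH hN x k).differentiableAt
@[fun_prop] lemma diffDH (k : ℕ) : Differentiable ℝ (dH N hN k) :=
  fun x => (hasDH hN x k).differentiableAt
@[fun_prop] lemma diffEH (k : ℕ) : Differentiable ℝ (eH N hN k) :=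
  fun x => (hasEH hN x k).differentiableAt
@[fun_prop] lemma diffAHalf : Differentiable ℝ (aHalf N hN) :=
  fun x => (hasAHalf hN x).differentiableAt
@[fun_prop] lemma diffANf : Differentiable ℝ (aNf N hN) :=
  fun x => (hasANf hN x).differentiableAt

end KGaux
namespace KGaux
variable {N : ℕ} (hN : 0 < N)

lemma co_inj {a b : ℕ} (ha1 : 1 ≤ a) (ha2 : a ≤ N) (hb1 : 1 ≤ b) (hb2 : b ≤ N)
    (h : co N hN a = co N hN b) : a = b := by
  have := congrArg Fin.val h
  simp only [co] at this
  rw [Nat.mod_eq_of_lt (by omega), Nat.mod_eq_of_lt (by omega)] at this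
  omega

lemma ind_co {a b : ℕ} (ha1 : 1 ≤ a) (ha2 : a ≤ N) (hb1 : 1 ≤ b) (hb2 : b ≤ N) :
    ind (co N hN a) (co N hN b) = if a = b then (1 : ℝ) else 0 := by
  by_cases h : a = b
  · subst h; simp [ind]
  · rw [if_neg h]
    unfold ind
    rw [if_neg fun hc => h (co_inj hN ha1 ha2 hb1 hb2 hc)]

lemma ind_anti (i j : Fin N) (u v : Fin N → ℝ) :
    (u i * v j - v i * u j) * ind i j = 0 := by
  unfold ind
  by_cases h : i = j
  · subst h; rw [if_pos rfl]; ring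
  · rw [if_neg h]; ring

lemma pb_swap (f g : E N → ℝ) (x : E N) : pb f g x = -pb g f x := by
  unfold pb
  rw [← Finset.sum_neg_distrib]
  exact Finset.sum_congr rfl fun k _ => by ring

end KGaux
namespace KGaux
variable {N : ℕ} (hN : 0 < N) (x : E N)

/-! ### Base brackets that vanish without any index hypotheses -/

lemma pb_aa (k m : ℕ) : pb (aH N hN k) (aH N hN m) x = 0 := by
  rw [pb_eval (hf := hasAH hN x k) (hg := hasAH hN x m)]
  linear_combination (ind_anti (co N hN k) (co N hN m) x.1 x.2)
    + (ind_anti (co N hN k) (co N hN (N - m)) x.1 x.2)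
    + (ind_anti (co N hN (N - k)) (co N hN m) x.1 x.2)
    + (ind_anti (co N hN (N - k)) (co N hN (N - m)) x.1 x.2)

lemma pb_ac (k m : ℕ) : pb (aH N hN k) (cH N hN m) x = 0 := by
  rw [pb_eval (hf := hasAH hN x k) (hg := hasCH hN x m)]
  linear_combination (ind_anti (co N hN k) (co N hN m) x.1 x.2)
    - (ind_anti (co N hN k) (co N hN (N - m)) x.1 x.2)
    + (ind_anti (co N hN (N - k)) (co N hN m) x.1 x.2)
    - (ind_anti (co N hN (N - k)) (co N hN (N - m)) x.1 x.2)

lemma pb_cc (k m : ℕ) : pb (cH N hN k) (cH N hN m) x = 0 := by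
  rw [pb_eval (hf := hasCH hN x k) (hg := hasCH hN x m)]
  linear_combination (ind_anti (co N hN k) (co N hN m) x.1 x.2)
    - (ind_anti (co N hN k) (co N hN (N - m)) x.1 x.2)
    - (ind_anti (co N hN (N - k)) (co N hN m) x.1 x.2)
    + (ind_anti (co N hN (N - k)) (co N hN (N - m)) x.1 x.2)

lemma pb_a_half (k : ℕ) : pb (aH N hN k) (aHalf N hN) x = 0 := by
  rw [pb_eval (hf := hasAH hN x k) (hg := hasAHalf hN x)]
  linear_combination (ind_anti (co N hN k) (co N hN (N / 2)) x.1 x.2)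
    + (ind_anti (co N hN (N - k)) (co N hN (N / 2)) x.1 x.2)

lemma pb_a_aN (k : ℕ) : pb (aH N hN k) (aNf N hN) x = 0 := by
  rw [pb_eval (hf := hasAH hN x k) (hg := hasANf hN x)]
  linear_combination (ind_anti (co N hN k) (co N hN N) x.1 x.2)
    + (ind_anti (co N hN (N - k)) (co N hN N) x.1 x.2)

lemma pb_c_half (k : ℕ) : pb (cH N hN k) (aHalf N hN) x = 0 := by
  rw [pb_eval (hf := hasCH hN x k) (hg := hasAHalf hN x)]
  linear_combination (ind_anti (co N hN k) (co N hN (N / 2)) x.1 x.2)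
    - (ind_anti (co N hN (N - k)) (co N hN (N / 2)) x.1 x.2)

lemma pb_c_aN (k : ℕ) : pb (cH N hN k) (aNf N hN) x = 0 := by
  rw [pb_eval (hf := hasCH hN x k) (hg := hasANf hN x)]
  linear_combination (ind_anti (co N hN k) (co N hN N) x.1 x.2)
    - (ind_anti (co N hN (N - k)) (co N hN N) x.1 x.2)

lemma pb_half_half : pb (aHalf N hN) (aHalf N hN) x = 0 := by
  rw [pb_eval (hf := hasAHalf hN x) (hg := hasAHalf hN x)]
  linear_combination (ind_anti (co N hN (N / 2)) (co N hN (N / 2)) x.1 x.2)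

lemma pb_half_aN : pb (aHalf N hN) (aNf N hN) x = 0 := by
  rw [pb_eval (hf := hasAHalf hN x) (hg := hasANf hN x)]
  linear_combination (ind_anti (co N hN (N / 2)) (co N hN N) x.1 x.2)

lemma pb_aN_aN : pb (aNf N hN) (aNf N hN) x = 0 := by
  rw [pb_eval (hf := hasANf hN x) (hg := hasANf hN x)]
  linear_combination (ind_anti (co N hN N) (co N hN N) x.1 x.2)

lemma pb_e_a (k m : ℕ) : pb (eH N hN k) (aH N hN m) x = 0 := by
  rw [pb_eval (hf := hasEH hN x k) (hg := hasAH hN x m)]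
  linear_combination 2 * (ind_anti (co N hN k) (co N hN m) x.1 x.2)
    + 2 * (ind_anti (co N hN k) (co N hN (N - m)) x.1 x.2)

lemma pb_e_c (k m : ℕ) : pb (eH N hN k) (cH N hN m) x = 0 := by
  rw [pb_eval (hf := hasEH hN x k) (hg := hasCH hN x m)]
  linear_combination 2 * (ind_anti (co N hN k) (co N hN m) x.1 x.2)
    - 2 * (ind_anti (co N hN k) (co N hN (N - m)) x.1 x.2)

lemma pb_e_half (k : ℕ) : pb (eH N hN k) (aHalf N hN) x = 0 := by
  rw [pb_eval (hf := hasEH hN x k) (hg := hasAHalf hN x)]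
  linear_combination 2 * (ind_anti (co N hN k) (co N hN (N / 2)) x.1 x.2)

lemma pb_e_aN (k : ℕ) : pb (eH N hN k) (aNf N hN) x = 0 := by
  rw [pb_eval (hf := hasEH hN x k) (hg := hasANf hN x)]
  linear_combination 2 * (ind_anti (co N hN k) (co N hN N) x.1 x.2)

lemma pb_e_e (k m : ℕ) : pb (eH N hN k) (eH N hN m) x = 0 := by
  rw [pb_eval (hf := hasEH hN x k) (hg := hasEH hN x m)]
  linear_combination 4 * (ind_anti (co N hN k) (co N hN m) x.1 x.2)

/-! ### Base brackets needing index hypotheses -/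

lemma pb_ab (k m : ℕ) (hk1 : 1 ≤ k) (hk2 : 2 * k < N) (hm1 : 1 ≤ m) (hm2 : 2 * m < N) :
    pb (aH N hN k) (bH N hN m) x = 0 := by
  rw [pb_eval (hf := hasAH hN x k) (hg := hasBH hN x m),
    ind_co hN (a := k) (b := m) (by omega) (by omega) (by omega) (by omega),
    ind_co hN (a := k) (b := N - m) (by omega) (by omega) (by omega) (by omega),
    ind_co hN (a := N - k) (b := m) (by omega) (by omega) (by omega) (by omega),
    ind_co hN (a := N - k) (b := N - m) (by omega) (by omega) (by omega) (by omega)]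
  rcases eq_or_ne k m with h | h
  · subst h
    rw [if_pos rfl, if_neg (by omega), if_neg (by omega), if_pos rfl]
    ring
  · rw [if_neg h, if_neg (by omega), if_neg (by omega), if_neg (by omega)]
    ring

lemma pb_ad (k m : ℕ) (hk1 : 1 ≤ k) (hk2 : 2 * k < N) (hm1 : 1 ≤ m) (hm2 : 2 * m < N) :
    pb (aH N hN k) (dH N hN m) x = 0 := by
  rw [pb_eval (hf := hasAH hN x k) (hg := hasDH hN x m),
    ind_co hN (a := k) (b := m) (by omega) (by omega) (by omega) (by omega),
    ind_co hN (a := k) (b := N - m) (by omega) (by omega) (by omega) (by omega),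
    ind_co hN (a := N - k) (b := m) (by omega) (by omega) (by omega) (by omega),
    ind_co hN (a := N - k) (b := N - m) (by omega) (by omega) (by omega) (by omega)]
  rcases eq_or_ne k m with h | h
  · subst h
    rw [if_pos rfl, if_neg (by omega), if_neg (by omega), if_pos rfl]
    ring
  · rw [if_neg h, if_neg (by omega), if_neg (by omega), if_neg (by omega)]
    ring

lemma pb_bb (k m : ℕ) (hk1 : 1 ≤ k) (hk2 : 2 * k < N) (hm1 : 1 ≤ m) (hm2 : 2 * m < N) :
    pb (bH N hN k) (bH N hN m) x = 0 := by
  rw [pb_eval (hf := hasBH hN x k) (hg := hasBH hN x m),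
    ind_co hN (a := k) (b := m) (by omega) (by omega) (by omega) (by omega),
    ind_co hN (a := k) (b := N - m) (by omega) (by omega) (by omega) (by omega),
    ind_co hN (a := N - k) (b := m) (by omega) (by omega) (by omega) (by omega),
    ind_co hN (a := N - k) (b := N - m) (by omega) (by omega) (by omega) (by omega)]
  rcases eq_or_ne k m with h | h
  · subst h
    rw [if_pos rfl, if_neg (by omega), if_neg (by omega), if_pos rfl]
    ring
  · rw [if_neg h, if_neg (by omega), if_neg (by omega), if_neg (by omega)]
    ring

lemma pb_dd (k m : ℕ) (hk1 : 1 ≤ k) (hk2 : 2 * k < N) (hm1 : 1 ≤ m) (hm2 : 2 * m < N) :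
    pb (dH N hN k) (dH N hN m) x = 0 := by
  rw [pb_eval (hf := hasDH hN x k) (hg := hasDH hN x m),
    ind_co hN (a := k) (b := m) (by omega) (by omega) (by omega) (by omega),
    ind_co hN (a := k) (b := N - m) (by omega) (by omega) (by omega) (by omega),
    ind_co hN (a := N - k) (b := m) (by omega) (by omega) (by omega) (by omega),
    ind_co hN (a := N - k) (b := N - m) (by omega) (by omega) (by omega) (by omega)]
  rcases eq_or_ne k m with h | h
  · subst h
    rw [if_pos rfl, if_neg (by omega), if_neg (by omega), if_pos rfl]
    ring
  · rw [if_neg h, if_neg (by omega), if_neg (by omega), if_neg (by omega)]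
    ring

lemma pb_bc (k m : ℕ) (hk1 : 1 ≤ k) (hk2 : 2 * k < N) (hm1 : 1 ≤ m) (hm2 : 2 * m < N) :
    pb (bH N hN k) (cH N hN m) x = if k = m then 2 * dH N hN k x else 0 := by
  rw [pb_eval (hf := hasBH hN x k) (hg := hasCH hN x m),
    ind_co hN (a := k) (b := m) (by omega) (by omega) (by omega) (by omega),
    ind_co hN (a := k) (b := N - m) (by omega) (by omega) (by omega) (by omega),
    ind_co hN (a := N - k) (b := m) (by omega) (by omega) (by omega) (by omega),
    ind_co hN (a := N - k) (b := N - m) (by omega) (by omega) (by omega) (by omega)]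
  rcases eq_or_ne k m with h | h
  · subst h
    rw [if_pos rfl, if_pos rfl, if_neg (by omega), if_neg (by omega), if_pos rfl]
    simp only [dH]
    ring
  · rw [if_neg h, if_neg h, if_neg (by omega), if_neg (by omega), if_neg (by omega)]
    ring

lemma pb_bd (k m : ℕ) (hk1 : 1 ≤ k) (hk2 : 2 * k < N) (hm1 : 1 ≤ m) (hm2 : 2 * m < N) :
    pb (bH N hN k) (dH N hN m) x = if k = m then -(2 * cH N hN k x) else 0 := by
  rw [pb_eval (hf := hasBH hN x k) (hg := hasDH hN x m),
    ind_co hN (a := k) (b := m) (by omega) (by omega) (by omega) (by omega),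
    ind_co hN (a := k) (b := N - m) (by omega) (by omega) (by omega) (by omega),
    ind_co hN (a := N - k) (b := m) (by omega) (by omega) (by omega) (by omega),
    ind_co hN (a := N - k) (b := N - m) (by omega) (by omega) (by omega) (by omega)]
  rcases eq_or_ne k m with h | h
  · subst h
    rw [if_pos rfl, if_pos rfl, if_neg (by omega), if_neg (by omega), if_pos rfl]
    simp only [cH]
    ring
  · rw [if_neg h, if_neg h, if_neg (by omega), if_neg (by omega), if_neg (by omega)]
    ring

lemma pb_cd (k m : ℕ) (hk1 : 1 ≤ k) (hk2 : 2 * k < N) (hm1 : 1 ≤ m) (hm2 : 2 * m < N) :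
    pb (cH N hN k) (dH N hN m) x = if k = m then 2 * bH N hN k x else 0 := by
  rw [pb_eval (hf := hasCH hN x k) (hg := hasDH hN x m),
    ind_co hN (a := k) (b := m) (by omega) (by omega) (by omega) (by omega),
    ind_co hN (a := k) (b := N - m) (by omega) (by omega) (by omega) (by omega),
    ind_co hN (a := N - k) (b := m) (by omega) (by omega) (by omega) (by omega),
    ind_co hN (a := N - k) (b := N - m) (by omega) (by omega) (by omega) (by omega)]
  rcases eq_or_ne k m with h | h
  · subst h
    rw [if_pos rfl, if_pos rfl, if_neg (by omega), if_neg (by omega), if_pos rfl]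
    simp only [bH]
    ring
  · rw [if_neg h, if_neg h, if_neg (by omega), if_neg (by omega), if_neg (by omega)]
    ring

/-! ### `aHalf`, `aNf` against `b, d` (disjoint support) -/

lemma pb_half_b (m : ℕ) (hE : N % 2 = 0) (hm1 : 1 ≤ m) (hm2 : 2 * m < N) :
    pb (aHalf N hN) (bH N hN m) x = 0 := by
  rw [pb_eval (hf := hasAHalf hN x) (hg := hasBH hN x m),
    ind_co hN (a := N / 2) (b := m) (by omega) (by omega) (by omega) (by omega),
    ind_co hN (a := N / 2) (b := N - m) (by omega) (by omega) (by omega) (by omega)]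
  rw [if_neg (by omega), if_neg (by omega)]
  ring

lemma pb_half_d (m : ℕ) (hE : N % 2 = 0) (hm1 : 1 ≤ m) (hm2 : 2 * m < N) :
    pb (aHalf N hN) (dH N hN m) x = 0 := by
  rw [pb_eval (hf := hasAHalf hN x) (hg := hasDH hN x m),
    ind_co hN (a := N / 2) (b := m) (by omega) (by omega) (by omega) (by omega),
    ind_co hN (a := N / 2) (b := N - m) (by omega) (by omega) (by omega) (by omega)]
  rw [if_neg (by omega), if_neg (by omega)]
  ring

lemma pb_aN_b (m : ℕ) (hm1 : 1 ≤ m) (hm2 : 2 * m < N) :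
    pb (aNf N hN) (bH N hN m) x = 0 := by
  rw [pb_eval (hf := hasANf hN x) (hg := hasBH hN x m),
    ind_co hN (a := N) (b := m) (by omega) (by omega) (by omega) (by omega),
    ind_co hN (a := N) (b := N - m) (by omega) (by omega) (by omega) (by omega)]
  rw [if_neg (by omega), if_neg (by omega)]
  ring

lemma pb_aN_d (m : ℕ) (hm1 : 1 ≤ m) (hm2 : 2 * m < N) :
    pb (aNf N hN) (dH N hN m) x = 0 := by
  rw [pb_eval (hf := hasANf hN x) (hg := hasDH hN x m),
    ind_co hN (a := N) (b := m) (by omega) (by omega) (by omega) (by omega),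
    ind_co hN (a := N) (b := N - m) (by omega) (by omega) (by omega) (by omega)]
  rw [if_neg (by omega), if_neg (by omega)]
  ring

/-! ### `eH` against `b, d` (the values) -/

lemma pb_e_b (k m : ℕ) (hk1 : 1 ≤ k) (hk2 : k ≤ N) (hm1 : 1 ≤ m) (hm2 : 2 * m < N) :
    pb (eH N hN k) (bH N hN m) x =
      if k = m then -(2 * dH N hN m x) else if k = N - m then 2 * dH N hN m x else 0 := by
  rw [pb_eval (hf := hasEH hN x k) (hg := hasBH hN x m),
    ind_co hN (a := k) (b := m) (by omega) (by omega) (by omega) (by omega),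
    ind_co hN (a := k) (b := N - m) (by omega) (by omega) (by omega) (by omega)]
  rcases eq_or_ne k m with h | h
  · subst h
    rw [if_pos rfl, if_pos rfl, if_neg (by omega)]
    simp only [dH]
    ring
  · rcases eq_or_ne k (N - m) with h2 | h2
    · subst h2
      rw [if_neg h, if_neg h, if_pos rfl, if_pos rfl]
      simp only [dH]
      ring
    · rw [if_neg h, if_neg h, if_neg h2, if_neg h2]
      ring

lemma pb_e_d (k m : ℕ) (hk1 : 1 ≤ k) (hk2 : k ≤ N) (hm1 : 1 ≤ m) (hm2 : 2 * m < N) :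
    pb (eH N hN k) (dH N hN m) x =
      if k = m then 2 * bH N hN m x else if k = N - m then -(2 * bH N hN m x) else 0 := by
  rw [pb_eval (hf := hasEH hN x k) (hg := hasDH hN x m),
    ind_co hN (a := k) (b := m) (by omega) (by omega) (by omega) (by omega),
    ind_co hN (a := k) (b := N - m) (by omega) (by omega) (by omega) (by omega)]
  rcases eq_or_ne k m with h | h
  · subst h
    rw [if_pos rfl, if_pos rfl, if_neg (by omega)]
    simp only [bH]
    ring
  · rcases eq_or_ne k (N - m) with h2 | h2
    · subst h2
      rw [if_neg h, if_neg h, if_pos rfl, if_pos rfl]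
      simp only [bH]
      ring
    · rw [if_neg h, if_neg h, if_neg h2, if_neg h2]
      ring

end KGaux
namespace KGaux
variable {N : ℕ}

lemma pb_right_add (f g h : E N → ℝ) (x : E N)
    (hg : DifferentiableAt ℝ g x) (hh : DifferentiableAt ℝ h x) :
    pb f (fun y => g y + h y) x = pb f g x + pb f h x := by
  unfold pb
  rw [← Finset.sum_add_distrib]
  refine Finset.sum_congr rfl fun k _ => ?_
  rw [fderiv_fun_add hg hh]
  simp only [ContinuousLinearMap.add_apply]
  ring

lemma pb_right_sub (f g h : E N → ℝ) (x : E N)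
    (hg : DifferentiableAt ℝ g x) (hh : DifferentiableAt ℝ h x) :
    pb f (fun y => g y - h y) x = pb f g x - pb f h x := by
  unfold pb
  rw [← Finset.sum_sub_distrib]
  refine Finset.sum_congr rfl fun k _ => ?_
  rw [fderiv_fun_sub hg hh]
  simp only [ContinuousLinearMap.sub_apply]
  ring

lemma pb_right_mul (f g h : E N → ℝ) (x : E N)
    (hg : DifferentiableAt ℝ g x) (hh : DifferentiableAt ℝ h x) :
    pb f (fun y => g y * h y) x = g x * pb f h x + h x * pb f g x := by
  unfold pb
  rw [Finset.mul_sum, Finset.mul_sum, ← Finset.sum_add_distrib]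
  refine Finset.sum_congr rfl fun k _ => ?_
  rw [fderiv_fun_mul hg hh]
  simp only [ContinuousLinearMap.add_apply, ContinuousLinearMap.smul_apply, smul_eq_mul]
  ring

lemma pb_right_const_mul (f g : E N → ℝ) (x : E N) (c : ℝ)
    (hg : DifferentiableAt ℝ g x) :
    pb f (fun y => c * g y) x = c * pb f g x := by
  unfold pb
  rw [Finset.mul_sum]
  refine Finset.sum_congr rfl fun k _ => ?_
  rw [fderiv_const_mul hg c]
  simp only [ContinuousLinearMap.smul_apply, smul_eq_mul]
  ring

lemma pb_right_div_const (f g : E N → ℝ) (x : E N) (c : ℝ)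
    (hg : DifferentiableAt ℝ g x) :
    pb f (fun y => g y / c) x = pb f g x / c := by
  have e : (fun y => g y / c) = fun y => c⁻¹ * g y := by
    funext y; rw [div_eq_mul_inv]; ring
  rw [e, pb_right_const_mul f g x c⁻¹ hg, div_eq_mul_inv]; ring

lemma pb_right_sq (f g : E N → ℝ) (x : E N) (hg : DifferentiableAt ℝ g x) :
    pb f (fun y => g y ^ 2) x = 2 * g x * pb f g x := by
  have e : (fun y => g y ^ 2) = fun y => g y * g y := by funext y; ring
  rw [e, pb_right_mul f g g x hg hg]; ring

lemma pb_right_const (f : E N → ℝ) (x : E N) (c : ℝ) :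
    pb f (fun _ => c) x = 0 := by
  unfold pb
  refine Finset.sum_eq_zero fun k _ => ?_
  rw [fderiv_fun_const]
  simp

lemma pb_right_sum {ι : Type*} (f : E N → ℝ) (s : Finset ι) (g : ι → E N → ℝ) (x : E N)
    (hg : ∀ i ∈ s, DifferentiableAt ℝ (g i) x) :
    pb f (fun y => ∑ i ∈ s, g i y) x = ∑ i ∈ s, pb f (g i) x := by
  unfold pb
  rw [Finset.sum_comm]
  refine Finset.sum_congr rfl fun k _ => ?_
  rw [fderiv_fun_sum hg]
  simp only [ContinuousLinearMap.sum_apply]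
  rw [Finset.mul_sum, Finset.mul_sum, ← Finset.sum_sub_distrib]

end KGaux

namespace KGaux
variable {N : ℕ}

lemma pb_right_K (hN : 0 < N) (f : E N → ℝ) (x : E N) (l : ℕ) :
    pb f (Kquart N hN l) x =
      3 * (pb f (cH N hN l) x * cH N hN (N / 2 - l) x
          + cH N hN l x * pb f (cH N hN (N / 2 - l)) x
          - (pb f (dH N hN l) x * dH N hN (N / 2 - l) x
            + dH N hN l x * pb f (dH N hN (N / 2 - l)) x))
        / (omg N l * omg N (N / 2 - l))
      - 3 / 4 * (2 * bH N hN l x * pb f (bH N hN l) x / omg N l ^ 2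
        + 2 * bH N hN (N / 2 - l) x * pb f (bH N hN (N / 2 - l)) x / omg N (N / 2 - l) ^ 2) := by
  rw [show Kquart N hN l = (fun y =>
    3 * (cH N hN l y * cH N hN (N / 2 - l) y - dH N hN l y * dH N hN (N / 2 - l) y)
      / (omg N l * omg N (N / 2 - l))
    - 3 / 4 * (bH N hN l y ^ 2 / omg N l ^ 2
      + bH N hN (N / 2 - l) y ^ 2 / omg N (N / 2 - l) ^ 2)) from rfl]
  simp (disch := fun_prop) only [pb_right_add, pb_right_sub, pb_right_mul,
    pb_right_const_mul, pb_right_div_const, pb_right_sq, pb_right_const]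
  ring

lemma omg_symm (hN : 0 < N) {m : ℕ} (hm : m ≤ N) : omg N (N - m) = omg N m := by
  unfold omg
  congr 2
  have hc : ((N - m : ℕ) : ℝ) = (N : ℝ) - (m : ℝ) := by
    rw [Nat.cast_sub hm]
  rw [hc]
  have hN' : (N : ℝ) ≠ 0 := Nat.cast_ne_zero.mpr (by omega)
  have : ((N : ℝ) - m) * Real.pi / N = Real.pi - m * Real.pi / N := by
    field_simp
  rw [this, Real.sin_pi_sub]

lemma sum_eval_zero (s : Finset ℕ) (F : ℕ → ℝ) (h0 : ∀ k ∈ s, F k = 0) :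
    ∑ k ∈ s, F k = 0 := Finset.sum_eq_zero h0

lemma sum_eval_one (s : Finset ℕ) (a : ℕ) (ha : a ∈ s) (F : ℕ → ℝ)
    (h0 : ∀ k ∈ s, k ≠ a → F k = 0) : ∑ k ∈ s, F k = F a := by
  rw [← Finset.sum_subset (Finset.singleton_subset_iff.mpr ha)
    (fun k hk hk' => h0 k hk (by simpa using hk'))]
  simp

lemma sum_eval_two (s : Finset ℕ) (a b : ℕ) (ha : a ∈ s) (hb : b ∈ s) (hab : a ≠ b)
    (F : ℕ → ℝ) (h0 : ∀ k ∈ s, k ≠ a → k ≠ b → F k = 0) :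
    ∑ k ∈ s, F k = F a + F b := by
  have hsub : ({a, b} : Finset ℕ) ⊆ s := by
    intro k hk; simp at hk; rcases hk with h | h <;> subst h <;> assumption
  rw [← Finset.sum_subset hsub (fun k hk hk' => by
    simp at hk'; exact h0 k hk hk'.1 hk'.2)]
  rw [Finset.sum_pair hab]

lemma sum_eval_four (s : Finset ℕ) (a b c d : ℕ) (ha : a ∈ s) (hb : b ∈ s) (hc : c ∈ s)
    (hd : d ∈ s) (hab : a ≠ b) (hac : a ≠ c) (had : a ≠ d) (hbc : b ≠ c) (hbd : b ≠ d)
    (hcd : c ≠ d) (F : ℕ → ℝ)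
    (h0 : ∀ k ∈ s, k ≠ a → k ≠ b → k ≠ c → k ≠ d → F k = 0) :
    ∑ k ∈ s, F k = F a + F b + F c + F d := by
  have hsub : ({a, b, c, d} : Finset ℕ) ⊆ s := by
    intro k hk; simp at hk; rcases hk with h | h | h | h <;> subst h <;> assumption
  rw [← Finset.sum_subset hsub (fun k hk hk' => by
    simp at hk'; exact h0 k hk hk'.1 hk'.2.1 hk'.2.2.1 hk'.2.2.2)]
  rw [show ({a, b, c, d} : Finset ℕ) = insert a (insert b (insert c {d})) from rfl]
  rw [Finset.sum_insert (by simp [hab, hac, had]),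
    Finset.sum_insert (by simp [hbc, hbd]),
    Finset.sum_insert (by simp [hcd]), Finset.sum_singleton]
  ring

end KGaux
namespace KGaux
variable {N : ℕ} (hN : 0 < N) (x : E N)

lemma pb_left_sub (f g h : E N → ℝ)
    (hf : DifferentiableAt ℝ f x) (hg : DifferentiableAt ℝ g x) :
    pb (fun y => f y - g y) h x = pb f h x - pb g h x := by
  rw [pb_swap, pb_right_sub h f g x hf hg, pb_swap f h, pb_swap g h]; ring

lemma pb_q_K_zero (f : E N → ℝ) (l : ℕ)
    (h1 : pb f (cH N hN l) x = 0) (h2 : pb f (cH N hN (N / 2 - l)) x = 0)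
    (h3 : pb f (dH N hN l) x = 0) (h4 : pb f (dH N hN (N / 2 - l)) x = 0)
    (h5 : pb f (bH N hN l) x = 0) (h6 : pb f (bH N hN (N / 2 - l)) x = 0) :
    pb f (Kquart N hN l) x = 0 := by
  rw [pb_right_K hN f x l, h1, h2, h3, h4, h5, h6]; ring

/-! ### quadratic family members against `K` -/

lemma pb_a_K (k l : ℕ) (hE : N % 2 = 0) (hk1 : 1 ≤ k) (hk2 : 2 * k < N)
    (hl1 : 1 ≤ l) (hl2 : 4 * l < N) :
    pb (aH N hN k) (Kquart N hN l) x = 0 := by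
  refine pb_q_K_zero hN x _ l (pb_ac hN x k l) (pb_ac hN x k (N / 2 - l)) ?_ ?_ ?_ ?_
  · exact pb_ad hN x k l hk1 hk2 hl1 (by omega)
  · exact pb_ad hN x k (N / 2 - l) hk1 hk2 (by omega) (by omega)
  · exact pb_ab hN x k l hk1 hk2 hl1 (by omega)
  · exact pb_ab hN x k (N / 2 - l) hk1 hk2 (by omega) (by omega)

lemma pb_half_K (l : ℕ) (hE : N % 2 = 0) (hl1 : 1 ≤ l) (hl2 : 4 * l < N) :
    pb (aHalf N hN) (Kquart N hN l) x = 0 := by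
  refine pb_q_K_zero hN x _ l ?_ ?_ ?_ ?_ ?_ ?_
  · rw [pb_swap, pb_c_half hN x l]; ring
  · rw [pb_swap, pb_c_half hN x (N / 2 - l)]; ring
  · exact pb_half_d hN x l hE hl1 (by omega)
  · exact pb_half_d hN x (N / 2 - l) hE (by omega) (by omega)
  · exact pb_half_b hN x l hE hl1 (by omega)
  · exact pb_half_b hN x (N / 2 - l) hE (by omega) (by omega)

lemma pb_aN_K (l : ℕ) (hE : N % 2 = 0) (hl1 : 1 ≤ l) (hl2 : 4 * l < N) :
    pb (aNf N hN) (Kquart N hN l) x = 0 := by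
  refine pb_q_K_zero hN x _ l ?_ ?_ ?_ ?_ ?_ ?_
  · rw [pb_swap, pb_c_aN hN x l]; ring
  · rw [pb_swap, pb_c_aN hN x (N / 2 - l)]; ring
  · exact pb_aN_d hN x l hl1 (by omega)
  · exact pb_aN_d hN x (N / 2 - l) (by omega) (by omega)
  · exact pb_aN_b hN x l hl1 (by omega)
  · exact pb_aN_b hN x (N / 2 - l) (by omega) (by omega)

lemma pb_c_K_ne (r j : ℕ) (hE : N % 2 = 0) (hr1 : 1 ≤ r) (hr2 : 2 * r < N)
    (hj1 : 1 ≤ j) (hj2 : 4 * j < N) (h1 : r ≠ j) (h2 : r ≠ N / 2 - j) :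
    pb (cH N hN r) (Kquart N hN j) x = 0 := by
  refine pb_q_K_zero hN x _ j (pb_cc hN x r j) (pb_cc hN x r (N / 2 - j)) ?_ ?_ ?_ ?_
  · rw [pb_cd hN x r j hr1 hr2 hj1 (by omega), if_neg h1]
  · rw [pb_cd hN x r (N / 2 - j) hr1 hr2 (by omega) (by omega), if_neg h2]
  · rw [pb_swap, pb_bc hN x j r hj1 (by omega) hr1 hr2, if_neg (fun h => h1 h.symm)]; ring
  · rw [pb_swap, pb_bc hN x (N / 2 - j) r (by omega) (by omega) hr1 hr2,
      if_neg (fun h => h2 h.symm)]; ring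

lemma pb_d_K_ne (r j : ℕ) (hE : N % 2 = 0) (hr1 : 1 ≤ r) (hr2 : 2 * r < N)
    (hj1 : 1 ≤ j) (hj2 : 4 * j < N) (h1 : r ≠ j) (h2 : r ≠ N / 2 - j) :
    pb (dH N hN r) (Kquart N hN j) x = 0 := by
  refine pb_q_K_zero hN x _ j ?_ ?_ ?_ ?_ ?_ ?_
  · rw [pb_swap, pb_cd hN x j r hj1 (by omega) hr1 hr2, if_neg (fun h => h1 h.symm)]; ring
  · rw [pb_swap, pb_cd hN x (N / 2 - j) r (by omega) (by omega) hr1 hr2,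
      if_neg (fun h => h2 h.symm)]; ring
  · exact pb_dd hN x r j hr1 hr2 hj1 (by omega)
  · exact pb_dd hN x r (N / 2 - j) hr1 hr2 (by omega) (by omega)
  · rw [pb_swap, pb_bd hN x j r hj1 (by omega) hr1 hr2, if_neg (fun h => h1 h.symm)]; ring
  · rw [pb_swap, pb_bd hN x (N / 2 - j) r (by omega) (by omega) hr1 hr2,
      if_neg (fun h => h2 h.symm)]; ring

lemma pb_b_K_ne (r j : ℕ) (hE : N % 2 = 0) (hr1 : 1 ≤ r) (hr2 : 2 * r < N)
    (hj1 : 1 ≤ j) (hj2 : 4 * j < N) (h1 : r ≠ j) (h2 : r ≠ N / 2 - j) :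
    pb (bH N hN r) (Kquart N hN j) x = 0 := by
  refine pb_q_K_zero hN x _ j ?_ ?_ ?_ ?_ ?_ ?_
  · rw [pb_bc hN x r j hr1 hr2 hj1 (by omega), if_neg h1]
  · rw [pb_bc hN x r (N / 2 - j) hr1 hr2 (by omega) (by omega), if_neg h2]
  · rw [pb_bd hN x r j hr1 hr2 hj1 (by omega), if_neg h1]
  · rw [pb_bd hN x r (N / 2 - j) hr1 hr2 (by omega) (by omega), if_neg h2]
  · exact pb_bb hN x r j hr1 hr2 hj1 (by omega)
  · exact pb_bb hN x r (N / 2 - j) hr1 hr2 (by omega) (by omega)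

lemma pb_c4_K (j : ℕ) (h4 : N % 4 = 0) (hN4 : 4 ≤ N) (hj1 : 1 ≤ j) (hj2 : 4 * j < N) :
    pb (cH N hN (N / 4)) (Kquart N hN j) x = 0 :=
  pb_c_K_ne hN x (N / 4) j (by omega) (by omega) (by omega) hj1 hj2 (by omega) (by omega)

/-! ### `B` against things -/

lemma pb_a_B (k m : ℕ) (hE : N % 2 = 0) (hk1 : 1 ≤ k) (hk2 : 2 * k < N)
    (hm1 : 1 ≤ m) (hm2 : 4 * m < N) :
    pb (aH N hN k) (fun y => bH N hN m y - bH N hN (N / 2 - m) y) x = 0 := by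
  rw [pb_right_sub _ _ _ x (diffBH hN m x) (diffBH hN (N / 2 - m) x),
    pb_ab hN x k m hk1 hk2 hm1 (by omega),
    pb_ab hN x k (N / 2 - m) hk1 hk2 (by omega) (by omega)]
  ring

lemma pb_half_B (m : ℕ) (hE : N % 2 = 0) (hm1 : 1 ≤ m) (hm2 : 4 * m < N) :
    pb (aHalf N hN) (fun y => bH N hN m y - bH N hN (N / 2 - m) y) x = 0 := by
  rw [pb_right_sub _ _ _ x (diffBH hN m x) (diffBH hN (N / 2 - m) x),
    pb_half_b hN x m hE hm1 (by omega),
    pb_half_b hN x (N / 2 - m) hE (by omega) (by omega)]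
  ring

lemma pb_aN_B (m : ℕ) (hE : N % 2 = 0) (hm1 : 1 ≤ m) (hm2 : 4 * m < N) :
    pb (aNf N hN) (fun y => bH N hN m y - bH N hN (N / 2 - m) y) x = 0 := by
  rw [pb_right_sub _ _ _ x (diffBH hN m x) (diffBH hN (N / 2 - m) x),
    pb_aN_b hN x m hm1 (by omega),
    pb_aN_b hN x (N / 2 - m) (by omega) (by omega)]
  ring

lemma pb_B_B (m l : ℕ) (hE : N % 2 = 0) (hm1 : 1 ≤ m) (hm2 : 4 * m < N)
    (hl1 : 1 ≤ l) (hl2 : 4 * l < N) :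
    pb (fun y => bH N hN m y - bH N hN (N / 2 - m) y)
      (fun y => bH N hN l y - bH N hN (N / 2 - l) y) x = 0 := by
  rw [pb_left_sub x _ _ _ (diffBH hN m x) (diffBH hN (N / 2 - m) x),
    pb_right_sub _ _ _ x (diffBH hN l x) (diffBH hN (N / 2 - l) x),
    pb_right_sub _ _ _ x (diffBH hN l x) (diffBH hN (N / 2 - l) x),
    pb_bb hN x m l hm1 (by omega) hl1 (by omega),
    pb_bb hN x m (N / 2 - l) hm1 (by omega) (by omega) (by omega),
    pb_bb hN x (N / 2 - m) l (by omega) (by omega) hl1 (by omega),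
    pb_bb hN x (N / 2 - m) (N / 2 - l) (by omega) (by omega) (by omega) (by omega)]
  ring

lemma pb_B_c4 (m : ℕ) (h4 : N % 4 = 0) (hN4 : 4 ≤ N) (hm1 : 1 ≤ m) (hm2 : 4 * m < N) :
    pb (fun y => bH N hN m y - bH N hN (N / 2 - m) y) (cH N hN (N / 4)) x = 0 := by
  rw [pb_left_sub x _ _ _ (diffBH hN m x) (diffBH hN (N / 2 - m) x),
    pb_bc hN x m (N / 4) hm1 (by omega) (by omega) (by omega),
    pb_bc hN x (N / 2 - m) (N / 4) (by omega) (by omega) (by omega) (by omega),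
    if_neg (by omega : ¬ m = N / 4), if_neg (by omega : ¬ N / 2 - m = N / 4)]
  ring

lemma pb_B_K (m l : ℕ) (hE : N % 2 = 0) (hm1 : 1 ≤ m) (hm2 : 4 * m < N)
    (hl1 : 1 ≤ l) (hl2 : 4 * l < N) :
    pb (fun y => bH N hN m y - bH N hN (N / 2 - m) y) (Kquart N hN l) x = 0 := by
  have hc : ∀ j, 1 ≤ j → 2 * j < N →
      pb (fun y => bH N hN m y - bH N hN (N / 2 - m) y) (cH N hN j) x
        = (if m = j then 2 * dH N hN m x else 0)
          - (if N / 2 - m = j then 2 * dH N hN (N / 2 - m) x else 0) := fun j hj1 hj2 => by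
    rw [pb_left_sub x _ _ _ (diffBH hN m x) (diffBH hN (N / 2 - m) x),
      pb_bc hN x m j hm1 (by omega) hj1 hj2,
      pb_bc hN x (N / 2 - m) j (by omega) (by omega) hj1 hj2]
  have hd : ∀ j, 1 ≤ j → 2 * j < N →
      pb (fun y => bH N hN m y - bH N hN (N / 2 - m) y) (dH N hN j) x
        = (if m = j then -(2 * cH N hN m x) else 0)
          - (if N / 2 - m = j then -(2 * cH N hN (N / 2 - m) x) else 0) := fun j hj1 hj2 => by
    rw [pb_left_sub x _ _ _ (diffBH hN m x) (diffBH hN (N / 2 - m) x),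
      pb_bd hN x m j hm1 (by omega) hj1 hj2,
      pb_bd hN x (N / 2 - m) j (by omega) (by omega) hj1 hj2]
  have hb : ∀ j, 1 ≤ j → 2 * j < N →
      pb (fun y => bH N hN m y - bH N hN (N / 2 - m) y) (bH N hN j) x = 0 := fun j hj1 hj2 => by
    rw [pb_left_sub x _ _ _ (diffBH hN m x) (diffBH hN (N / 2 - m) x),
      pb_bb hN x m j hm1 (by omega) hj1 hj2,
      pb_bb hN x (N / 2 - m) j (by omega) (by omega) hj1 hj2]
    ring
  rw [pb_right_K hN _ x l,
    hc l hl1 (by omega), hc (N / 2 - l) (by omega) (by omega),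
    hd l hl1 (by omega), hd (N / 2 - l) (by omega) (by omega),
    hb l hl1 (by omega), hb (N / 2 - l) (by omega) (by omega)]
  rcases eq_or_ne m l with h | h
  · subst h
    rw [if_pos rfl, if_neg (by omega), if_neg (by omega), if_pos rfl,
      if_pos rfl, if_neg (by omega), if_neg (by omega), if_pos rfl]
    ring
  · rw [if_neg h, if_neg (by omega), if_neg (by omega), if_neg (by omega),
      if_neg h, if_neg (by omega), if_neg (by omega), if_neg (by omega)]
    ring

lemma pb_K_K (j l : ℕ) (hE : N % 2 = 0) (hj1 : 1 ≤ j) (hj2 : 4 * j < N)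
    (hl1 : 1 ≤ l) (hl2 : 4 * l < N) :
    pb (Kquart N hN j) (Kquart N hN l) x = 0 := by
  rcases eq_or_ne j l with h | h
  · subst h
    have hs := pb_swap (N := N) (Kquart N hN j) (Kquart N hN j) x
    linarith
  · have e1 : pb (Kquart N hN j) (cH N hN l) x = 0 := by
      rw [pb_swap, pb_c_K_ne hN x l j hE hl1 (by omega) hj1 hj2 (fun hh => h hh.symm)
        (by omega)]; ring
    have e2 : pb (Kquart N hN j) (cH N hN (N / 2 - l)) x = 0 := by
      rw [pb_swap, pb_c_K_ne hN x (N / 2 - l) j hE (by omega) (by omega) hj1 hj2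
        (by omega) (by omega)]; ring
    have e3 : pb (Kquart N hN j) (dH N hN l) x = 0 := by
      rw [pb_swap, pb_d_K_ne hN x l j hE hl1 (by omega) hj1 hj2 (fun hh => h hh.symm)
        (by omega)]; ring
    have e4 : pb (Kquart N hN j) (dH N hN (N / 2 - l)) x = 0 := by
      rw [pb_swap, pb_d_K_ne hN x (N / 2 - l) j hE (by omega) (by omega) hj1 hj2
        (by omega) (by omega)]; ring
    have e5 : pb (Kquart N hN j) (bH N hN l) x = 0 := by
      rw [pb_swap, pb_b_K_ne hN x l j hE hl1 (by omega) hj1 hj2 (fun hh => h hh.symm)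
        (by omega)]; ring
    have e6 : pb (Kquart N hN j) (bH N hN (N / 2 - l)) x = 0 := by
      rw [pb_swap, pb_b_K_ne hN x (N / 2 - l) j hE (by omega) (by omega) hj1 hj2
        (by omega) (by omega)]; ring
    rw [pb_right_K hN _ x l, e1, e2, e3, e4, e5, e6]
    ring

end KGaux
namespace KGaux
variable {N : ℕ} (hN : 0 < N) (x : E N)

lemma diffH2 : DifferentiableAt ℝ (H2KG N hN) x := by
  unfold H2KG; fun_prop

lemma diffH4 (β : ℝ) : DifferentiableAt ℝ (H4even N hN β) x := by
  unfold H4even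
  by_cases h4 : N % 4 = 0
  · simp only [if_pos h4]; fun_prop
  · simp only [if_neg h4]; fun_prop

lemma pbH2_expand (f : E N → ℝ) :
    pb f (H2KG N hN) x = ∑ k ∈ Finset.Icc 1 N, omg N k / 2 * pb f (eH N hN k) x := by
  rw [show H2KG N hN = fun y => ∑ k ∈ Finset.Icc 1 N, omg N k / 2 * eH N hN k y from rfl,
    pb_right_sum f _ _ x (fun i _ => by fun_prop)]
  exact Finset.sum_congr rfl fun k _ =>
    pb_right_const_mul f (eH N hN k) x (omg N k / 2) (by fun_prop)

lemma pbH_alike (f : E N → ℝ) (β : ℝ) (hE : N % 2 = 0) (hN4 : 4 ≤ N)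
    (hfa : ∀ m, 1 ≤ m → 2 * m < N → pb f (aH N hN m) x = 0)
    (hfb : ∀ m, 1 ≤ m → 2 * m < N → pb f (bH N hN m) x = 0)
    (hfc : ∀ m, 1 ≤ m → 2 * m < N → pb f (cH N hN m) x = 0)
    (hfd : ∀ m, 1 ≤ m → 2 * m < N → pb f (dH N hN m) x = 0)
    (hfhalf : pb f (aHalf N hN) x = 0) (hfN : pb f (aNf N hN) x = 0)
    (hfe : ∀ m, 1 ≤ m → m ≤ N → pb f (eH N hN m) x = 0) :
    pb f (fun y => H2KG N hN y + H4even N hN β y) x = 0 := by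
  have s1 : ∑ k ∈ Finset.Ico 1 (N / 2), pb f (aH N hN k) x / omg N k = 0 :=
    Finset.sum_eq_zero fun k hk => by
      rw [Finset.mem_Ico] at hk
      rw [hfa k hk.1 (by omega)]; ring
  have s2 : ∑ k ∈ Finset.Ico 1 (N / 2),
      (3 * (2 * aH N hN k x * pb f (aH N hN k) x) + aH N hN k x ^ 2 * 0
        - 2 * bH N hN k x * pb f (bH N hN k) x) / omg N k ^ 2 = 0 :=
    Finset.sum_eq_zero fun k hk => by
      rw [Finset.mem_Ico] at hk
      rw [hfa k hk.1 (by omega), hfb k hk.1 (by omega)]; ring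
  have s3 : ∑ k ∈ Finset.Ico 1 (N / 2), ∑ l ∈ Finset.Ico (k + 1) (N / 2),
      (aH N hN k x * pb f (aH N hN l) x + aH N hN l x * pb f (aH N hN k) x)
        / (omg N k * omg N l) = 0 :=
    Finset.sum_eq_zero fun k hk => Finset.sum_eq_zero fun l hl => by
      rw [Finset.mem_Ico] at hk hl
      rw [hfa k hk.1 (by omega), hfa l (by omega) (by omega)]; ring
  have s4 : ∑ k ∈ (Finset.Ico 1 (N / 2)).filter (fun k => 4 * k < N),
      (cH N hN k x * pb f (cH N hN (N / 2 - k)) x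
        + cH N hN (N / 2 - k) x * pb f (cH N hN k) x
        - (dH N hN k x * pb f (dH N hN (N / 2 - k)) x
          + dH N hN (N / 2 - k) x * pb f (dH N hN k) x))
        / (omg N k * omg N (N / 2 - k)) = 0 :=
    Finset.sum_eq_zero fun k hk => by
      rw [Finset.mem_filter, Finset.mem_Ico] at hk
      rw [hfc k hk.1.1 (by omega), hfc (N / 2 - k) (by omega) (by omega),
        hfd k hk.1.1 (by omega), hfd (N / 2 - k) (by omega) (by omega)]; ring
  rw [pb_right_add f _ _ x (diffH2 hN x) (diffH4 hN x β)]
  have h2 : pb f (H2KG N hN) x = 0 := by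
    rw [pbH2_expand hN x f]
    exact Finset.sum_eq_zero fun k hk => by
      rw [Finset.mem_Icc] at hk
      rw [hfe k hk.1 hk.2]; ring
  rw [h2, zero_add]
  show pb f (fun y => H4even N hN β y) x = 0
  by_cases h4 : N % 4 = 0
  · simp only [H4even, if_pos h4]
    simp (disch := fun_prop) only [pb_right_add, pb_right_sub, pb_right_mul,
      pb_right_const_mul, pb_right_div_const, pb_right_sq, pb_right_sum, pb_right_const]
    rw [hfhalf, hfN, hfc (N / 4) (by omega) (by omega), hfd (N / 4) (by omega) (by omega),
      s1, s2, s3, s4]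
    ring
  · simp only [H4even, if_neg h4]
    simp (disch := fun_prop) only [pb_right_add, pb_right_sub, pb_right_mul,
      pb_right_const_mul, pb_right_div_const, pb_right_sq, pb_right_sum, pb_right_const]
    rw [hfhalf, hfN, s1, s2, s3, s4]
    ring

end KGaux
namespace KGaux
variable {N : ℕ} (hN : 0 < N) (x : E N)

lemma pbH_c4 (β : ℝ) (h4 : N % 4 = 0) (hN4 : 4 ≤ N) :
    pb (cH N hN (N / 4)) (fun y => H2KG N hN y + H4even N hN β y) x = 0 := by
  set f := cH N hN (N / 4) with hf
  have hfa : ∀ m : ℕ, pb f (aH N hN m) x = 0 := fun m => by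
    rw [hf, pb_swap, pb_ac hN x m (N / 4)]; ring
  have hfe : ∀ m : ℕ, pb f (eH N hN m) x = 0 := fun m => by
    rw [hf, pb_swap, pb_e_c hN x m (N / 4)]; ring
  have hfc : ∀ m : ℕ, pb f (cH N hN m) x = 0 := fun m => pb_cc hN x (N / 4) m
  have hfb : ∀ m, 1 ≤ m → 2 * m < N →
      pb f (bH N hN m) x = -(if m = N / 4 then 2 * dH N hN m x else 0) := fun m h1 h2 => by
    rw [hf, pb_swap, pb_bc hN x m (N / 4) h1 h2 (by omega) (by omega)]
  have hfd : ∀ m, 1 ≤ m → 2 * m < N →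
      pb f (dH N hN m) x = if N / 4 = m then 2 * bH N hN (N / 4) x else 0 := fun m h1 h2 =>
    pb_cd hN x (N / 4) m (by omega) (by omega) h1 h2
  have s1 : ∑ k ∈ Finset.Ico 1 (N / 2), pb f (aH N hN k) x / omg N k = 0 :=
    Finset.sum_eq_zero fun k _ => by rw [hfa k]; ring
  have s2 : ∑ k ∈ Finset.Ico 1 (N / 2),
      (3 * (2 * aH N hN k x * pb f (aH N hN k) x) + aH N hN k x ^ 2 * 0
        - 2 * bH N hN k x * pb f (bH N hN k) x) / omg N k ^ 2
      = 4 * bH N hN (N / 4) x * dH N hN (N / 4) x / omg N (N / 4) ^ 2 := by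
    rw [sum_eval_one (Finset.Ico 1 (N / 2)) (N / 4) (by rw [Finset.mem_Ico]; omega) _ ?z]
    · rw [hfa (N / 4), hfb (N / 4) (by omega) (by omega), if_pos rfl]; ring
    case z =>
      intro k hk hne
      rw [Finset.mem_Ico] at hk
      rw [hfa k, hfb k (by omega) (by omega), if_neg hne]; ring
  have s3 : ∑ k ∈ Finset.Ico 1 (N / 2), ∑ l ∈ Finset.Ico (k + 1) (N / 2),
      (aH N hN k x * pb f (aH N hN l) x + aH N hN l x * pb f (aH N hN k) x)
        / (omg N k * omg N l) = 0 :=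
    Finset.sum_eq_zero fun k _ => Finset.sum_eq_zero fun l _ => by
      rw [hfa k, hfa l]; ring
  have s4 : ∑ k ∈ (Finset.Ico 1 (N / 2)).filter (fun k => 4 * k < N),
      (cH N hN k x * pb f (cH N hN (N / 2 - k)) x
        + cH N hN (N / 2 - k) x * pb f (cH N hN k) x
        - (dH N hN k x * pb f (dH N hN (N / 2 - k)) x
          + dH N hN (N / 2 - k) x * pb f (dH N hN k) x))
        / (omg N k * omg N (N / 2 - k)) = 0 :=
    Finset.sum_eq_zero fun k hk => by
      rw [Finset.mem_filter, Finset.mem_Ico] at hk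
      rw [hfc k, hfc (N / 2 - k),
        hfd k hk.1.1 (by omega), if_neg (by omega : ¬ N / 4 = k),
        hfd (N / 2 - k) (by omega) (by omega), if_neg (by omega : ¬ N / 4 = N / 2 - k)]
      ring
  rw [pb_right_add f _ _ x (diffH2 hN x) (diffH4 hN x β)]
  have h2 : pb f (H2KG N hN) x = 0 := by
    rw [pbH2_expand hN x f]
    exact Finset.sum_eq_zero fun k _ => by rw [hfe k]; ring
  rw [h2, zero_add]
  show pb f (fun y => H4even N hN β y) x = 0
  simp only [H4even, if_pos h4]
  simp (disch := fun_prop) only [pb_right_add, pb_right_sub, pb_right_mul,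
    pb_right_const_mul, pb_right_div_const, pb_right_sq, pb_right_sum, pb_right_const]
  rw [show pb f (aHalf N hN) x = 0 from pb_c_half hN x (N / 4),
    show pb f (aNf N hN) x = 0 from pb_c_aN hN x (N / 4),
    hfc (N / 4), hfd (N / 4) (by omega) (by omega), if_pos rfl,
    s1, s2, s3, s4]
  ring

end KGaux
namespace KGaux
variable {N : ℕ} (hN : 0 < N) (x : E N)

lemma pbH_B (β : ℝ) (m : ℕ) (hE : N % 2 = 0) (hN4 : 4 ≤ N)
    (hm1 : 1 ≤ m) (hm2 : 4 * m < N) :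
    pb (fun y => bH N hN m y - bH N hN (N / 2 - m) y)
      (fun y => H2KG N hN y + H4even N hN β y) x = 0 := by
  set f : E N → ℝ := fun y => bH N hN m y - bH N hN (N / 2 - m) y with hf
  have hdf : DifferentiableAt ℝ f x := by rw [hf]; fun_prop
  have hfa : ∀ j, 1 ≤ j → 2 * j < N → pb f (aH N hN j) x = 0 := fun j h1 h2 => by
    rw [hf, pb_left_sub x _ _ _ (diffBH hN m x) (diffBH hN (N / 2 - m) x)]
    rw [pb_swap (bH N hN m), pb_ab hN x j m h1 h2 hm1 (by omega),
      pb_swap (bH N hN (N / 2 - m)), pb_ab hN x j (N / 2 - m) h1 h2 (by omega) (by omega)]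
    ring
  have hfb : ∀ j, 1 ≤ j → 2 * j < N → pb f (bH N hN j) x = 0 := fun j h1 h2 => by
    rw [hf, pb_left_sub x _ _ _ (diffBH hN m x) (diffBH hN (N / 2 - m) x),
      pb_bb hN x m j hm1 (by omega) h1 h2,
      pb_bb hN x (N / 2 - m) j (by omega) (by omega) h1 h2]
    ring
  have hfc : ∀ j, 1 ≤ j → 2 * j < N → pb f (cH N hN j) x =
      (if m = j then 2 * dH N hN m x else 0)
      - (if N / 2 - m = j then 2 * dH N hN (N / 2 - m) x else 0) := fun j h1 h2 => by
    rw [hf, pb_left_sub x _ _ _ (diffBH hN m x) (diffBH hN (N / 2 - m) x),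
      pb_bc hN x m j hm1 (by omega) h1 h2,
      pb_bc hN x (N / 2 - m) j (by omega) (by omega) h1 h2]
  have hfd : ∀ j, 1 ≤ j → 2 * j < N → pb f (dH N hN j) x =
      (if m = j then -(2 * cH N hN m x) else 0)
      - (if N / 2 - m = j then -(2 * cH N hN (N / 2 - m) x) else 0) := fun j h1 h2 => by
    rw [hf, pb_left_sub x _ _ _ (diffBH hN m x) (diffBH hN (N / 2 - m) x),
      pb_bd hN x m j hm1 (by omega) h1 h2,
      pb_bd hN x (N / 2 - m) j (by omega) (by omega) h1 h2]
  have hfe : ∀ j, 1 ≤ j → j ≤ N → pb f (eH N hN j) x =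
      -((if j = m then -(2 * dH N hN m x) else if j = N - m then 2 * dH N hN m x else 0)
        - (if j = N / 2 - m then -(2 * dH N hN (N / 2 - m) x)
          else if j = N - (N / 2 - m) then 2 * dH N hN (N / 2 - m) x else 0)) := fun j h1 h2 => by
    rw [hf, pb_swap, pb_right_sub _ _ _ x (diffBH hN m x) (diffBH hN (N / 2 - m) x),
      pb_e_b hN x j m h1 h2 hm1 (by omega),
      pb_e_b hN x j (N / 2 - m) h1 h2 (by omega) (by omega)]
  have s1 : ∑ k ∈ Finset.Ico 1 (N / 2), pb f (aH N hN k) x / omg N k = 0 :=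
    Finset.sum_eq_zero fun k hk => by
      rw [Finset.mem_Ico] at hk
      rw [hfa k hk.1 (by omega)]; ring
  have s2 : ∑ k ∈ Finset.Ico 1 (N / 2),
      (3 * (2 * aH N hN k x * pb f (aH N hN k) x) + aH N hN k x ^ 2 * 0
        - 2 * bH N hN k x * pb f (bH N hN k) x) / omg N k ^ 2 = 0 :=
    Finset.sum_eq_zero fun k hk => by
      rw [Finset.mem_Ico] at hk
      rw [hfa k hk.1 (by omega), hfb k hk.1 (by omega)]; ring
  have s3 : ∑ k ∈ Finset.Ico 1 (N / 2), ∑ l ∈ Finset.Ico (k + 1) (N / 2),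
      (aH N hN k x * pb f (aH N hN l) x + aH N hN l x * pb f (aH N hN k) x)
        / (omg N k * omg N l) = 0 :=
    Finset.sum_eq_zero fun k hk => Finset.sum_eq_zero fun l hl => by
      rw [Finset.mem_Ico] at hk hl
      rw [hfa k hk.1 (by omega), hfa l (by omega) (by omega)]; ring
  have s4 : ∑ k ∈ (Finset.Ico 1 (N / 2)).filter (fun k => 4 * k < N),
      (cH N hN k x * pb f (cH N hN (N / 2 - k)) x
        + cH N hN (N / 2 - k) x * pb f (cH N hN k) x
        - (dH N hN k x * pb f (dH N hN (N / 2 - k)) x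
          + dH N hN (N / 2 - k) x * pb f (dH N hN k) x))
        / (omg N k * omg N (N / 2 - k)) = 0 :=
    Finset.sum_eq_zero fun k hk => by
      rw [Finset.mem_filter, Finset.mem_Ico] at hk
      rw [hfc k hk.1.1 (by omega), hfc (N / 2 - k) (by omega) (by omega),
        hfd k hk.1.1 (by omega), hfd (N / 2 - k) (by omega) (by omega)]
      rcases eq_or_ne k m with h | h
      · subst h
        rw [if_neg (by omega : ¬ k = N / 2 - k), if_pos rfl, if_pos rfl,
          if_neg (by omega : ¬ N / 2 - k = k), if_neg (by omega : ¬ k = N / 2 - k),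
          if_pos rfl, if_pos rfl, if_neg (by omega : ¬ N / 2 - k = k)]
        ring
      · rw [if_neg (by omega : ¬ m = N / 2 - k),
          if_neg (by omega : ¬ N / 2 - m = N / 2 - k),
          if_neg (fun hh => h hh.symm : ¬ m = k), if_neg (by omega : ¬ N / 2 - m = k),
          if_neg (by omega : ¬ m = N / 2 - k),
          if_neg (by omega : ¬ N / 2 - m = N / 2 - k),
          if_neg (fun hh => h hh.symm : ¬ m = k), if_neg (by omega : ¬ N / 2 - m = k)]
        ring
  rw [pb_right_add f _ _ x (diffH2 hN x) (diffH4 hN x β)]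
  have h2 : pb f (H2KG N hN) x = 0 := by
    rw [pbH2_expand hN x f]
    rw [sum_eval_four (Finset.Icc 1 N) m (N - m) (N / 2 - m) (N - (N / 2 - m))
      (by rw [Finset.mem_Icc]; omega) (by rw [Finset.mem_Icc]; omega)
      (by rw [Finset.mem_Icc]; omega) (by rw [Finset.mem_Icc]; omega)
      (by omega) (by omega) (by omega) (by omega) (by omega) (by omega) _ ?z0]
    · rw [hfe m (by omega) (by omega), hfe (N - m) (by omega) (by omega),
        hfe (N / 2 - m) (by omega) (by omega), hfe (N - (N / 2 - m)) (by omega) (by omega)]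
      rw [if_pos rfl, if_neg (by omega), if_neg (by omega)]
      rw [if_neg (by omega), if_pos rfl, if_neg (by omega), if_neg (by omega)]
      rw [if_neg (by omega), if_neg (by omega), if_pos rfl]
      rw [if_neg (by omega), if_neg (by omega), if_neg (by omega), if_pos rfl]
      rw [omg_symm hN (by omega : m ≤ N), omg_symm hN (by omega : N / 2 - m ≤ N)]
      ring
    case z0 =>
      intro j hj h1 h2 h3 h4
      rw [Finset.mem_Icc] at hj
      rw [hfe j hj.1 hj.2, if_neg h1, if_neg h2, if_neg h3, if_neg h4]
      ring
  rw [h2, zero_add]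
  show pb f (fun y => H4even N hN β y) x = 0
  by_cases h4 : N % 4 = 0
  · simp only [H4even, if_pos h4]
    simp (disch := fun_prop) only [pb_right_add, pb_right_sub, pb_right_mul,
      pb_right_const_mul, pb_right_div_const, pb_right_sq, pb_right_sum, pb_right_const]
    rw [show pb f (aHalf N hN) x = 0 from by
        rw [hf, pb_swap, pb_half_B hN x m hE hm1 hm2]; ring,
      show pb f (aNf N hN) x = 0 from by
        rw [hf, pb_swap, pb_aN_B hN x m hE hm1 hm2]; ring,
      hfc (N / 4) (by omega) (by omega), hfd (N / 4) (by omega) (by omega),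
      if_neg (by omega : ¬ m = N / 4), if_neg (by omega : ¬ N / 2 - m = N / 4),
      if_neg (by omega : ¬ m = N / 4), if_neg (by omega : ¬ N / 2 - m = N / 4),
      s1, s2, s3, s4]
    ring
  · simp only [H4even, if_neg h4]
    simp (disch := fun_prop) only [pb_right_add, pb_right_sub, pb_right_mul,
      pb_right_const_mul, pb_right_div_const, pb_right_sq, pb_right_sum, pb_right_const]
    rw [show pb f (aHalf N hN) x = 0 from by
        rw [hf, pb_swap, pb_half_B hN x m hE hm1 hm2]; ring,
      show pb f (aNf N hN) x = 0 from by
        rw [hf, pb_swap, pb_aN_B hN x m hE hm1 hm2]; ring,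
      s1, s2, s3, s4]
    ring

end KGaux
namespace KGaux
variable {N : ℕ} (hN : 0 < N) (x : E N)

set_option maxHeartbeats 1000000 in
lemma pbH_K (β : ℝ) (l : ℕ) (hE : N % 2 = 0) (hN4 : 4 ≤ N)
    (hl1 : 1 ≤ l) (hl2 : 4 * l < N) :
    pb (Kquart N hN l) (fun y => H2KG N hN y + H4even N hN β y) x = 0 := by
  set f := Kquart N hN l with hf
  have hfa : ∀ j, 1 ≤ j → 2 * j < N → pb f (aH N hN j) x = 0 := fun j h1 h2 => by
    rw [hf, pb_swap, pb_a_K hN x j l hE h1 h2 hl1 hl2]; ring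
  -- brackets of the four core quadratics with K itself
  have hb_l : pb (bH N hN l) (Kquart N hN l) x
      = (6 * dH N hN l x * cH N hN (N / 2 - l) x
        + 6 * cH N hN l x * dH N hN (N / 2 - l) x) / (omg N l * omg N (N / 2 - l)) := by
    rw [pb_right_K hN _ x l,
      pb_bc hN x l l hl1 (by omega) hl1 (by omega), if_pos rfl,
      pb_bc hN x l (N / 2 - l) hl1 (by omega) (by omega) (by omega), if_neg (by omega),
      pb_bd hN x l l hl1 (by omega) hl1 (by omega), if_pos rfl,
      pb_bd hN x l (N / 2 - l) hl1 (by omega) (by omega) (by omega), if_neg (by omega),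
      pb_bb hN x l l hl1 (by omega) hl1 (by omega),
      pb_bb hN x l (N / 2 - l) hl1 (by omega) (by omega) (by omega)]
    ring
  have hb_l' : pb (bH N hN (N / 2 - l)) (Kquart N hN l) x
      = (6 * dH N hN l x * cH N hN (N / 2 - l) x
        + 6 * cH N hN l x * dH N hN (N / 2 - l) x) / (omg N l * omg N (N / 2 - l)) := by
    rw [pb_right_K hN _ x l,
      pb_bc hN x (N / 2 - l) l (by omega) (by omega) hl1 (by omega), if_neg (by omega),
      pb_bc hN x (N / 2 - l) (N / 2 - l) (by omega) (by omega) (by omega) (by omega), if_pos rfl,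
      pb_bd hN x (N / 2 - l) l (by omega) (by omega) hl1 (by omega), if_neg (by omega),
      pb_bd hN x (N / 2 - l) (N / 2 - l) (by omega) (by omega) (by omega) (by omega), if_pos rfl,
      pb_bb hN x (N / 2 - l) l (by omega) (by omega) hl1 (by omega),
      pb_bb hN x (N / 2 - l) (N / 2 - l) (by omega) (by omega) (by omega) (by omega)]
    ring
  have hc_l : pb (cH N hN l) (Kquart N hN l) x
      = -(6 * bH N hN l x * dH N hN (N / 2 - l) x) / (omg N l * omg N (N / 2 - l))
        + 3 * bH N hN l x * dH N hN l x / omg N l ^ 2 := by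
    rw [pb_right_K hN _ x l, pb_cc hN x l l, pb_cc hN x l (N / 2 - l),
      pb_cd hN x l l hl1 (by omega) hl1 (by omega), if_pos rfl,
      pb_cd hN x l (N / 2 - l) hl1 (by omega) (by omega) (by omega), if_neg (by omega),
      show pb (cH N hN l) (bH N hN l) x = -(2 * dH N hN l x) from by
        rw [pb_swap, pb_bc hN x l l hl1 (by omega) hl1 (by omega), if_pos rfl],
      show pb (cH N hN l) (bH N hN (N / 2 - l)) x = 0 from by
        rw [pb_swap, pb_bc hN x (N / 2 - l) l (by omega) (by omega) hl1 (by omega),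
          if_neg (by omega)]; ring]
    ring
  have hc_l' : pb (cH N hN (N / 2 - l)) (Kquart N hN l) x
      = -(6 * dH N hN l x * bH N hN (N / 2 - l) x) / (omg N l * omg N (N / 2 - l))
        + 3 * bH N hN (N / 2 - l) x * dH N hN (N / 2 - l) x / omg N (N / 2 - l) ^ 2 := by
    rw [pb_right_K hN _ x l, pb_cc hN x (N / 2 - l) l, pb_cc hN x (N / 2 - l) (N / 2 - l),
      pb_cd hN x (N / 2 - l) l (by omega) (by omega) hl1 (by omega), if_neg (by omega),
      pb_cd hN x (N / 2 - l) (N / 2 - l) (by omega) (by omega) (by omega) (by omega), if_pos rfl,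
      show pb (cH N hN (N / 2 - l)) (bH N hN l) x = 0 from by
        rw [pb_swap, pb_bc hN x l (N / 2 - l) hl1 (by omega) (by omega) (by omega),
          if_neg (by omega)]; ring,
      show pb (cH N hN (N / 2 - l)) (bH N hN (N / 2 - l)) x
          = -(2 * dH N hN (N / 2 - l) x) from by
        rw [pb_swap, pb_bc hN x (N / 2 - l) (N / 2 - l) (by omega) (by omega) (by omega)
          (by omega), if_pos rfl]]
    ring
  have hd_l : pb (dH N hN l) (Kquart N hN l) x
      = -(6 * bH N hN l x * cH N hN (N / 2 - l) x) / (omg N l * omg N (N / 2 - l))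
        - 3 * bH N hN l x * cH N hN l x / omg N l ^ 2 := by
    rw [pb_right_K hN _ x l,
      show pb (dH N hN l) (cH N hN l) x = -(2 * bH N hN l x) from by
        rw [pb_swap, pb_cd hN x l l hl1 (by omega) hl1 (by omega), if_pos rfl],
      show pb (dH N hN l) (cH N hN (N / 2 - l)) x = 0 from by
        rw [pb_swap, pb_cd hN x (N / 2 - l) l (by omega) (by omega) hl1 (by omega),
          if_neg (by omega)]; ring,
      pb_dd hN x l l hl1 (by omega) hl1 (by omega),
      pb_dd hN x l (N / 2 - l) hl1 (by omega) (by omega) (by omega),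
      show pb (dH N hN l) (bH N hN l) x = 2 * cH N hN l x from by
        rw [pb_swap, pb_bd hN x l l hl1 (by omega) hl1 (by omega), if_pos rfl]; ring,
      show pb (dH N hN l) (bH N hN (N / 2 - l)) x = 0 from by
        rw [pb_swap, pb_bd hN x (N / 2 - l) l (by omega) (by omega) hl1 (by omega),
          if_neg (by omega)]; ring]
    ring
  have hd_l' : pb (dH N hN (N / 2 - l)) (Kquart N hN l) x
      = -(6 * cH N hN l x * bH N hN (N / 2 - l) x) / (omg N l * omg N (N / 2 - l))
        - 3 * bH N hN (N / 2 - l) x * cH N hN (N / 2 - l) x / omg N (N / 2 - l) ^ 2 := by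
    rw [pb_right_K hN _ x l,
      show pb (dH N hN (N / 2 - l)) (cH N hN l) x = 0 from by
        rw [pb_swap, pb_cd hN x l (N / 2 - l) hl1 (by omega) (by omega) (by omega),
          if_neg (by omega)]; ring,
      show pb (dH N hN (N / 2 - l)) (cH N hN (N / 2 - l)) x
          = -(2 * bH N hN (N / 2 - l) x) from by
        rw [pb_swap, pb_cd hN x (N / 2 - l) (N / 2 - l) (by omega) (by omega) (by omega)
          (by omega), if_pos rfl],
      pb_dd hN x (N / 2 - l) l (by omega) (by omega) hl1 (by omega),
      pb_dd hN x (N / 2 - l) (N / 2 - l) (by omega) (by omega) (by omega) (by omega),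
      show pb (dH N hN (N / 2 - l)) (bH N hN l) x = 0 from by
        rw [pb_swap, pb_bd hN x l (N / 2 - l) hl1 (by omega) (by omega) (by omega),
          if_neg (by omega)]; ring,
      show pb (dH N hN (N / 2 - l)) (bH N hN (N / 2 - l)) x
          = 2 * cH N hN (N / 2 - l) x from by
        rw [pb_swap, pb_bd hN x (N / 2 - l) (N / 2 - l) (by omega) (by omega) (by omega)
          (by omega), if_pos rfl]; ring]
    ring
  have hfb_l : pb f (bH N hN l) x
      = -((6 * dH N hN l x * cH N hN (N / 2 - l) x
        + 6 * cH N hN l x * dH N hN (N / 2 - l) x) / (omg N l * omg N (N / 2 - l))) := by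
    rw [hf, pb_swap, hb_l]
  have hfb_l' : pb f (bH N hN (N / 2 - l)) x
      = -((6 * dH N hN l x * cH N hN (N / 2 - l) x
        + 6 * cH N hN l x * dH N hN (N / 2 - l) x) / (omg N l * omg N (N / 2 - l))) := by
    rw [hf, pb_swap, hb_l']
  have hfc_l : pb f (cH N hN l) x
      = -(-(6 * bH N hN l x * dH N hN (N / 2 - l) x) / (omg N l * omg N (N / 2 - l))
        + 3 * bH N hN l x * dH N hN l x / omg N l ^ 2) := by
    rw [hf, pb_swap, hc_l]
  have hfc_l' : pb f (cH N hN (N / 2 - l)) x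
      = -(-(6 * dH N hN l x * bH N hN (N / 2 - l) x) / (omg N l * omg N (N / 2 - l))
        + 3 * bH N hN (N / 2 - l) x * dH N hN (N / 2 - l) x / omg N (N / 2 - l) ^ 2) := by
    rw [hf, pb_swap, hc_l']
  have hfd_l : pb f (dH N hN l) x
      = -(-(6 * bH N hN l x * cH N hN (N / 2 - l) x) / (omg N l * omg N (N / 2 - l))
        - 3 * bH N hN l x * cH N hN l x / omg N l ^ 2) := by
    rw [hf, pb_swap, hd_l]
  have hfd_l' : pb f (dH N hN (N / 2 - l)) x
      = -(-(6 * cH N hN l x * bH N hN (N / 2 - l) x) / (omg N l * omg N (N / 2 - l))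
        - 3 * bH N hN (N / 2 - l) x * cH N hN (N / 2 - l) x / omg N (N / 2 - l) ^ 2) := by
    rw [hf, pb_swap, hd_l']
  have he : ∀ j, 1 ≤ j → j ≤ N → pb (eH N hN j) (Kquart N hN l) x
      = 3 * (0 * cH N hN (N / 2 - l) x + cH N hN l x * 0
        - ((if j = l then 2 * bH N hN l x else if j = N - l then -(2 * bH N hN l x) else 0)
            * dH N hN (N / 2 - l) x
          + dH N hN l x * (if j = N / 2 - l then 2 * bH N hN (N / 2 - l) x
              else if j = N - (N / 2 - l) then -(2 * bH N hN (N / 2 - l) x) else 0)))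
          / (omg N l * omg N (N / 2 - l))
        - 3 / 4 * (2 * bH N hN l x * (if j = l then -(2 * dH N hN l x)
            else if j = N - l then 2 * dH N hN l x else 0) / omg N l ^ 2
          + 2 * bH N hN (N / 2 - l) x * (if j = N / 2 - l then -(2 * dH N hN (N / 2 - l) x)
            else if j = N - (N / 2 - l) then 2 * dH N hN (N / 2 - l) x else 0)
            / omg N (N / 2 - l) ^ 2) := fun j h1 h2 => by
    rw [pb_right_K hN _ x l, pb_e_c hN x j l, pb_e_c hN x j (N / 2 - l),
      pb_e_d hN x j l h1 h2 hl1 (by omega),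
      pb_e_d hN x j (N / 2 - l) h1 h2 (by omega) (by omega),
      pb_e_b hN x j l h1 h2 hl1 (by omega),
      pb_e_b hN x j (N / 2 - l) h1 h2 (by omega) (by omega)]
  have hfel : pb f (eH N hN l) x
      = 6 * bH N hN l x * dH N hN (N / 2 - l) x / (omg N l * omg N (N / 2 - l))
        - 3 * bH N hN l x * dH N hN l x / omg N l ^ 2 := by
    rw [hf, pb_swap, he l (by omega) (by omega), if_pos rfl,
      if_neg (by omega : ¬ l = N / 2 - l), if_neg (by omega : ¬ l = N - (N / 2 - l)),
      if_pos rfl, if_neg (by omega : ¬ l = N / 2 - l),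
      if_neg (by omega : ¬ l = N - (N / 2 - l))]
    ring
  have hfeNl : pb f (eH N hN (N - l)) x
      = -(6 * bH N hN l x * dH N hN (N / 2 - l) x / (omg N l * omg N (N / 2 - l))
        - 3 * bH N hN l x * dH N hN l x / omg N l ^ 2) := by
    rw [hf, pb_swap, he (N - l) (by omega) (by omega),
      if_neg (by omega : ¬ N - l = l), if_pos rfl,
      if_neg (by omega : ¬ N - l = N / 2 - l),
      if_neg (by omega : ¬ N - l = N - (N / 2 - l)),
      if_neg (by omega : ¬ N - l = l), if_pos rfl,
      if_neg (by omega : ¬ N - l = N / 2 - l),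
      if_neg (by omega : ¬ N - l = N - (N / 2 - l))]
    ring
  have hfel' : pb f (eH N hN (N / 2 - l)) x
      = 6 * dH N hN l x * bH N hN (N / 2 - l) x / (omg N l * omg N (N / 2 - l))
        - 3 * bH N hN (N / 2 - l) x * dH N hN (N / 2 - l) x / omg N (N / 2 - l) ^ 2 := by
    rw [hf, pb_swap, he (N / 2 - l) (by omega) (by omega),
      if_neg (by omega : ¬ N / 2 - l = l), if_neg (by omega : ¬ N / 2 - l = N - l),
      if_pos rfl,
      if_neg (by omega : ¬ N / 2 - l = l), if_neg (by omega : ¬ N / 2 - l = N - l),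
      if_pos rfl]
    ring
  have hfeNl' : pb f (eH N hN (N - (N / 2 - l))) x
      = -(6 * dH N hN l x * bH N hN (N / 2 - l) x / (omg N l * omg N (N / 2 - l))
        - 3 * bH N hN (N / 2 - l) x * dH N hN (N / 2 - l) x / omg N (N / 2 - l) ^ 2) := by
    rw [hf, pb_swap, he (N - (N / 2 - l)) (by omega) (by omega),
      if_neg (by omega : ¬ N - (N / 2 - l) = l),
      if_neg (by omega : ¬ N - (N / 2 - l) = N - l),
      if_neg (by omega : ¬ N - (N / 2 - l) = N / 2 - l), if_pos rfl,
      if_neg (by omega : ¬ N - (N / 2 - l) = l),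
      if_neg (by omega : ¬ N - (N / 2 - l) = N - l),
      if_neg (by omega : ¬ N - (N / 2 - l) = N / 2 - l), if_pos rfl]
    ring
  have s1 : ∑ k ∈ Finset.Ico 1 (N / 2), pb f (aH N hN k) x / omg N k = 0 :=
    Finset.sum_eq_zero fun k hk => by
      rw [Finset.mem_Ico] at hk
      rw [hfa k hk.1 (by omega)]; ring
  have s2 : ∑ k ∈ Finset.Ico 1 (N / 2),
      (3 * (2 * aH N hN k x * pb f (aH N hN k) x) + aH N hN k x ^ 2 * 0
        - 2 * bH N hN k x * pb f (bH N hN k) x) / omg N k ^ 2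
      = 2 * bH N hN l x * ((6 * dH N hN l x * cH N hN (N / 2 - l) x
          + 6 * cH N hN l x * dH N hN (N / 2 - l) x) / (omg N l * omg N (N / 2 - l)))
          / omg N l ^ 2
        + 2 * bH N hN (N / 2 - l) x * ((6 * dH N hN l x * cH N hN (N / 2 - l) x
          + 6 * cH N hN l x * dH N hN (N / 2 - l) x) / (omg N l * omg N (N / 2 - l)))
          / omg N (N / 2 - l) ^ 2 := by
    rw [sum_eval_two (Finset.Ico 1 (N / 2)) l (N / 2 - l)
      (by rw [Finset.mem_Ico]; omega) (by rw [Finset.mem_Ico]; omega) (by omega) _ ?z2]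
    · rw [hfa l hl1 (by omega), hfa (N / 2 - l) (by omega) (by omega), hfb_l, hfb_l']
      ring
    case z2 =>
      intro k hk hk1 hk2
      rw [Finset.mem_Ico] at hk
      rw [hfa k hk.1 (by omega),
        show pb f (bH N hN k) x = 0 from by
          rw [hf, pb_swap, pb_b_K_ne hN x k l hE hk.1 (by omega) hl1 hl2 hk1 hk2]; ring]
      ring
  have s3 : ∑ k ∈ Finset.Ico 1 (N / 2), ∑ j ∈ Finset.Ico (k + 1) (N / 2),
      (aH N hN k x * pb f (aH N hN j) x + aH N hN j x * pb f (aH N hN k) x)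
        / (omg N k * omg N j) = 0 :=
    Finset.sum_eq_zero fun k hk => Finset.sum_eq_zero fun j hj => by
      rw [Finset.mem_Ico] at hk hj
      rw [hfa k hk.1 (by omega), hfa j (by omega) (by omega)]; ring
  have s4 : ∑ k ∈ (Finset.Ico 1 (N / 2)).filter (fun k => 4 * k < N),
      (cH N hN k x * pb f (cH N hN (N / 2 - k)) x
        + cH N hN (N / 2 - k) x * pb f (cH N hN k) x
        - (dH N hN k x * pb f (dH N hN (N / 2 - k)) x
          + dH N hN (N / 2 - k) x * pb f (dH N hN k) x))
        / (omg N k * omg N (N / 2 - k))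
      = (-(3 * cH N hN l x * bH N hN (N / 2 - l) x * dH N hN (N / 2 - l) x
            / omg N (N / 2 - l) ^ 2)
        - 3 * cH N hN (N / 2 - l) x * bH N hN l x * dH N hN l x / omg N l ^ 2
        - 3 * dH N hN l x * bH N hN (N / 2 - l) x * cH N hN (N / 2 - l) x
            / omg N (N / 2 - l) ^ 2
        - 3 * dH N hN (N / 2 - l) x * bH N hN l x * cH N hN l x / omg N l ^ 2)
        / (omg N l * omg N (N / 2 - l)) := by
    rw [sum_eval_one ((Finset.Ico 1 (N / 2)).filter (fun k => 4 * k < N)) l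
      (by rw [Finset.mem_filter, Finset.mem_Ico]; omega) _ ?z4]
    · rw [hfc_l, hfc_l', hfd_l, hfd_l']
      ring
    case z4 =>
      intro k hk hkl
      rw [Finset.mem_filter, Finset.mem_Ico] at hk
      rw [show pb f (cH N hN (N / 2 - k)) x = 0 from by
          rw [hf, pb_swap, pb_c_K_ne hN x (N / 2 - k) l hE (by omega) (by omega) hl1 hl2
            (by omega) (by omega)]; ring,
        show pb f (cH N hN k) x = 0 from by
          rw [hf, pb_swap, pb_c_K_ne hN x k l hE hk.1.1 (by omega) hl1 hl2 hkl
            (by omega)]; ring,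
        show pb f (dH N hN (N / 2 - k)) x = 0 from by
          rw [hf, pb_swap, pb_d_K_ne hN x (N / 2 - k) l hE (by omega) (by omega) hl1 hl2
            (by omega) (by omega)]; ring,
        show pb f (dH N hN k) x = 0 from by
          rw [hf, pb_swap, pb_d_K_ne hN x k l hE hk.1.1 (by omega) hl1 hl2 hkl
            (by omega)]; ring]
      ring
  rw [pb_right_add f _ _ x (diffH2 hN x) (diffH4 hN x β)]
  have h2 : pb f (H2KG N hN) x = 0 := by
    rw [pbH2_expand hN x f]
    rw [sum_eval_four (Finset.Icc 1 N) l (N - l) (N / 2 - l) (N - (N / 2 - l))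
      (by rw [Finset.mem_Icc]; omega) (by rw [Finset.mem_Icc]; omega)
      (by rw [Finset.mem_Icc]; omega) (by rw [Finset.mem_Icc]; omega)
      (by omega) (by omega) (by omega) (by omega) (by omega) (by omega) _ ?z0]
    · rw [hfel, hfeNl, hfel', hfeNl',
        omg_symm hN (by omega : l ≤ N), omg_symm hN (by omega : N / 2 - l ≤ N)]
      ring
    case z0 =>
      intro j hj h1 h2 h3 h4
      rw [Finset.mem_Icc] at hj
      rw [show pb f (eH N hN j) x = -(pb (eH N hN j) (Kquart N hN l) x) from by
          rw [hf, pb_swap],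
        he j hj.1 hj.2, if_neg h1, if_neg h2, if_neg h3, if_neg h4,
        if_neg h1, if_neg h2, if_neg h3, if_neg h4]
      ring
  rw [h2, zero_add]
  show pb f (fun y => H4even N hN β y) x = 0
  by_cases h4 : N % 4 = 0
  · simp only [H4even, if_pos h4]
    simp (disch := fun_prop) only [pb_right_add, pb_right_sub, pb_right_mul,
      pb_right_const_mul, pb_right_div_const, pb_right_sq, pb_right_sum, pb_right_const]
    rw [show pb f (aHalf N hN) x = 0 from by
        rw [hf, pb_swap, pb_half_K hN x l hE hl1 hl2]; ring,
      show pb f (aNf N hN) x = 0 from by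
        rw [hf, pb_swap, pb_aN_K hN x l hE hl1 hl2]; ring,
      show pb f (cH N hN (N / 4)) x = 0 from by
        rw [hf, pb_swap, pb_c_K_ne hN x (N / 4) l hE (by omega) (by omega) hl1 hl2
          (by omega) (by omega)]; ring,
      show pb f (dH N hN (N / 4)) x = 0 from by
        rw [hf, pb_swap, pb_d_K_ne hN x (N / 4) l hE (by omega) (by omega) hl1 hl2
          (by omega) (by omega)]; ring,
      s1, s2, s3, s4]
    ring
  · simp only [H4even, if_neg h4]
    simp (disch := fun_prop) only [pb_right_add, pb_right_sub, pb_right_mul,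
      pb_right_const_mul, pb_right_div_const, pb_right_sq, pb_right_sum, pb_right_const]
    rw [show pb f (aHalf N hN) x = 0 from by
        rw [hf, pb_swap, pb_half_K hN x l hE hl1 hl2]; ring,
      show pb f (aNf N hN) x = 0 from by
        rw [hf, pb_swap, pb_aN_K hN x l hE hl1 hl2]; ring,
      s1, s2, s3, s4]
    ring

end KGaux
open KGaux in
/-- For `N ≥ 4` even, the functions `a_k` (`1 ≤ k < N/2`), `a_{N/2}`,
`a_N`, `b_k − b_{N/2−k}` (`1 ≤ k < N/4`), `c_{N/4}` (if `4 ∣ N`), and `K_k`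
(`1 ≤ k < N/4`) pairwise Poisson-commute and each Poisson-commutes with the truncated
normal form `H̄ = H₂ + H̄₄` of the periodic KG lattice. -/
theorem KG_even_normal_form_integrable (N : ℕ) (hN : 4 ≤ N) (heven : Even N)
    (hN0 : 0 < N) (β : ℝ) :
    (∀ f ∈ evenFam N hN0, ∀ g ∈ evenFam N hN0, ∀ x, pb f g x = 0) ∧
    (∀ f ∈ evenFam N hN0, ∀ x,
      pb f (fun y => H2KG N hN0 y + H4even N hN0 β y) x = 0) := by
  have hE : N % 2 = 0 := Nat.even_iff.mp heven
  constructor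
  · rintro f hf g hg x
    rcases hf with ⟨k, hk1, hk2, rfl⟩ | rfl | rfl | ⟨k, hk1, hk2, rfl⟩ | ⟨h4f, rfl⟩ |
      ⟨k, hk1, hk2, rfl⟩ <;>
      rcases hg with ⟨m, hm1, hm2, rfl⟩ | rfl | rfl | ⟨m, hm1, hm2, rfl⟩ | ⟨h4g, rfl⟩ |
        ⟨m, hm1, hm2, rfl⟩
    -- f = aH k
    · exact pb_aa hN0 x k m
    · exact pb_a_half hN0 x k
    · exact pb_a_aN hN0 x k
    · exact pb_a_B hN0 x k m hE hk1 hk2 hm1 hm2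
    · exact pb_ac hN0 x k (N / 4)
    · exact pb_a_K hN0 x k m hE hk1 hk2 hm1 hm2
    -- f = aHalf
    · rw [pb_swap, pb_a_half hN0 x m]; exact neg_zero
    · exact pb_half_half hN0 x
    · exact pb_half_aN hN0 x
    · exact pb_half_B hN0 x m hE hm1 hm2
    · rw [pb_swap, pb_c_half hN0 x (N / 4)]; exact neg_zero
    · exact pb_half_K hN0 x m hE hm1 hm2
    -- f = aNf
    · rw [pb_swap, pb_a_aN hN0 x m]; exact neg_zero
    · rw [pb_swap, pb_half_aN hN0 x]; exact neg_zero
    · exact pb_aN_aN hN0 x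
    · exact pb_aN_B hN0 x m hE hm1 hm2
    · rw [pb_swap, pb_c_aN hN0 x (N / 4)]; exact neg_zero
    · exact pb_aN_K hN0 x m hE hm1 hm2
    -- f = B k
    · rw [pb_swap, pb_a_B hN0 x m k hE hm1 hm2 hk1 hk2]; exact neg_zero
    · rw [pb_swap, pb_half_B hN0 x k hE hk1 hk2]; exact neg_zero
    · rw [pb_swap, pb_aN_B hN0 x k hE hk1 hk2]; exact neg_zero
    · exact pb_B_B hN0 x k m hE hk1 hk2 hm1 hm2
    · exact pb_B_c4 hN0 x k h4g hN hk1 hk2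
    · exact pb_B_K hN0 x k m hE hk1 hk2 hm1 hm2
    -- f = cH (N/4)
    · rw [pb_swap, pb_ac hN0 x m (N / 4)]; exact neg_zero
    · exact pb_c_half hN0 x (N / 4)
    · exact pb_c_aN hN0 x (N / 4)
    · rw [pb_swap, pb_B_c4 hN0 x m h4f hN hm1 hm2]; exact neg_zero
    · exact pb_cc hN0 x (N / 4) (N / 4)
    · exact pb_c4_K hN0 x m h4f hN hm1 hm2
    -- f = Kquart k
    · rw [pb_swap, pb_a_K hN0 x m k hE hm1 hm2 hk1 hk2]; exact neg_zero
    · rw [pb_swap, pb_half_K hN0 x k hE hk1 hk2]; exact neg_zero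
    · rw [pb_swap, pb_aN_K hN0 x k hE hk1 hk2]; exact neg_zero
    · rw [pb_swap, pb_B_K hN0 x m k hE hm1 hm2 hk1 hk2]; exact neg_zero
    · rw [pb_swap, pb_c4_K hN0 x k h4g hN hk1 hk2]; exact neg_zero
    · exact pb_K_K hN0 x k m hE hk1 hk2 hm1 hm2
  · rintro f hf x
    rcases hf with ⟨k, hk1, hk2, rfl⟩ | rfl | rfl | ⟨k, hk1, hk2, rfl⟩ | ⟨h4f, rfl⟩ |
      ⟨k, hk1, hk2, rfl⟩
    · exact pbH_alike hN0 x (aH N hN0 k) β hE hN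
        (fun m _ _ => pb_aa hN0 x k m)
        (fun m h1 h2 => pb_ab hN0 x k m hk1 hk2 h1 h2)
        (fun m _ _ => pb_ac hN0 x k m)
        (fun m h1 h2 => pb_ad hN0 x k m hk1 hk2 h1 h2)
        (pb_a_half hN0 x k) (pb_a_aN hN0 x k)
        (fun m _ _ => by rw [pb_swap, pb_e_a hN0 x m k]; exact neg_zero)
    · exact pbH_alike hN0 x (aHalf N hN0) β hE hN
        (fun m _ _ => by rw [pb_swap, pb_a_half hN0 x m]; exact neg_zero)
        (fun m h1 h2 => pb_half_b hN0 x m hE h1 h2)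
        (fun m _ _ => by rw [pb_swap, pb_c_half hN0 x m]; exact neg_zero)
        (fun m h1 h2 => pb_half_d hN0 x m hE h1 h2)
        (pb_half_half hN0 x) (pb_half_aN hN0 x)
        (fun m _ _ => by rw [pb_swap, pb_e_half hN0 x m]; exact neg_zero)
    · exact pbH_alike hN0 x (aNf N hN0) β hE hN
        (fun m _ _ => by rw [pb_swap, pb_a_aN hN0 x m]; exact neg_zero)
        (fun m h1 h2 => pb_aN_b hN0 x m h1 h2)
        (fun m _ _ => by rw [pb_swap, pb_c_aN hN0 x m]; exact neg_zero)
        (fun m h1 h2 => pb_aN_d hN0 x m h1 h2)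
        (by rw [pb_swap, pb_half_aN hN0 x]; exact neg_zero) (pb_aN_aN hN0 x)
        (fun m _ _ => by rw [pb_swap, pb_e_aN hN0 x m]; exact neg_zero)
    · exact pbH_B hN0 x β k hE hN hk1 hk2
    · exact pbH_c4 hN0 x β h4f hN
    · exact pbH_K hN0 x β k hE hN hk1 hk2

end
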